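/- arXiv:2002.04411 — 2 statements merged into one kernel-verified Lean document; each statement's English description precedes it below -/
import Mathlib

section
/- Let L, M, R be connected graphs, each with at least 2 vertices, with pairwise disjoint vertex sets, let l ∈ V(L), r ∈ V(R), and let u ≠ v be vertices of M. Let G be obtained by identifying l with u and r with v; let G' be obtained by identifying both l and r with u; let G'' be obtained by identifying both l and r with v. Then N(G') − N(G) = (N(R)_r − 1)(N(L)_l · N(M−v)_u − N(M−u)_v) and N(G'') − N(G) = (N(L)_l − 1)(N(R)_r · N(M−u)_v − N(M−v)_u); consequently N(G') > N(G) or N(G'') > N(G). -/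
open SimpleGraph

/-- Number of (nonempty) connected induced subgraphs of `G`. -/
noncomputable def numCIS {V : Type*} (G : SimpleGraph V) : ℕ :=
  Nat.card {s : Finset V // s.Nonempty ∧ (G.induce (↑s : Set V)).Connected}

/-- Number of connected induced subgraphs of `G` containing the vertex `v`. -/
noncomputable def numCISat {V : Type*} (G : SimpleGraph V) (v : V) : ℕ :=
  Nat.card {s : Finset V // v ∈ s ∧ (G.induce (↑s : Set V)).Connected}

/-- Number of connected induced subgraphs of `G` containing both `u` and `v`. -/
noncomputable def numCISat2 {V : Type*} (G : SimpleGraph V) (u v : V) : ℕ :=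
  Nat.card {s : Finset V // u ∈ s ∧ v ∈ s ∧ (G.induce (↑s : Set V)).Connected}

namespace CISAux

open Finset
open scoped Classical

variable {V : Type*}


lemma reach_aux {G : SimpleGraph V} {S X Y : Set V} {w : V}
    (hXY : S ∩ X ∩ Y ⊆ {w})
    (hedge : ∀ x y, x ∈ S → y ∈ S → G.Adj x y → (x ∈ X ∧ y ∈ X) ∨ (x ∈ Y ∧ y ∈ Y)) :
    ∀ (z e : S) (_ : (G.induce S).Walk z e) (he : (e : V) ∈ X),
      (∀ hz : (z : V) ∈ X,
        (G.induce (S ∩ X)).Reachable ⟨z, ⟨z.2, hz⟩⟩ ⟨e, ⟨e.2, he⟩⟩) ∧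
      ((z : V) ∉ X → ∃ hw : w ∈ S ∩ X, (G.induce (S ∩ X)).Reachable ⟨w, hw⟩ ⟨e, ⟨e.2, he⟩⟩) := by
  intro z e p
  induction p with
  | nil => exact fun he => ⟨fun hz => Reachable.refl _, fun hz => absurd he hz⟩
  | @cons z y e h q ih =>
    intro he
    have hadj : G.Adj (z : V) (y : V) := h
    have hcase := hedge _ _ z.2 y.2 hadj
    constructor
    · intro hz
      rcases hcase with ⟨hzX, hyX⟩ | ⟨hzY, hyY⟩
      · exact (Adj.reachable (by exact hadj : (G.induce (S ∩ X)).Adj ⟨z, ⟨z.2, hz⟩⟩ ⟨y, ⟨y.2, hyX⟩⟩)).trans ((ih he).1 hyX)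
      · by_cases hyX : (y : V) ∈ X
        · have h1 : (y : V) = w := hXY ⟨⟨y.2, hyX⟩, hyY⟩
          have h2 : (z : V) = w := hXY ⟨⟨z.2, hz⟩, hzY⟩
          exact absurd (h2.trans h1.symm) hadj.ne
        · obtain ⟨hw, hr⟩ := (ih he).2 hyX
          have hzw : (z : V) = w := hXY ⟨⟨z.2, hz⟩, hzY⟩
          have : (⟨z, ⟨z.2, hz⟩⟩ : ↥(S ∩ X)) = ⟨w, hw⟩ := Subtype.ext hzw
          rw [this]; exact hr
    · intro hz
      rcases hcase with ⟨hzX, _⟩ | ⟨hzY, hyY⟩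
      · exact absurd hzX hz
      · by_cases hyX : (y : V) ∈ X
        · have hyw : (y : V) = w := hXY ⟨⟨y.2, hyX⟩, hyY⟩
          refine ⟨⟨hyw ▸ y.2, hyw ▸ hyX⟩, ?_⟩
          have hr := (ih he).1 hyX
          have : (⟨y, ⟨y.2, hyX⟩⟩ : ↥(S ∩ X)) = ⟨w, ⟨hyw ▸ y.2, hyw ▸ hyX⟩⟩ := Subtype.ext hyw
          rw [this] at hr; exact hr
        · exact (ih he).2 hyX

lemma cross_aux {G : SimpleGraph V} {S X Y : Set V} {w : V}
    (hXY : S ∩ X ∩ Y ⊆ {w})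
    (hedge : ∀ x y, x ∈ S → y ∈ S → G.Adj x y → (x ∈ X ∧ y ∈ X) ∨ (x ∈ Y ∧ y ∈ Y)) :
    ∀ (z e : S) (_ : (G.induce S).Walk z e) (_ : (e : V) ∉ X) (_ : (z : V) ∈ X), w ∈ S := by
  intro z e p
  induction p with
  | nil => exact fun he hz => absurd hz he
  | @cons z y e h q ih =>
    intro he hz
    have hadj : G.Adj (z : V) (y : V) := h
    rcases hedge _ _ z.2 y.2 hadj with ⟨_, hyX⟩ | ⟨hzY, _⟩
    · exact ih he hyX
    · have : (z : V) = w := hXY ⟨⟨z.2, hz⟩, hzY⟩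
      exact this ▸ z.2

lemma conn_project {G : SimpleGraph V} {S X Y : Set V} {w : V}
    (hXY : S ∩ X ∩ Y ⊆ {w})
    (hedge : ∀ x y, x ∈ S → y ∈ S → G.Adj x y → (x ∈ X ∧ y ∈ X) ∨ (x ∈ Y ∧ y ∈ Y))
    (hconn : (G.induce S).Connected) (hne : (S ∩ X).Nonempty) :
    (G.induce (S ∩ X)).Connected := by
  rw [connected_iff]
  refine ⟨?_, ?_⟩
  · intro a b
    have hr := hconn.preconnected ⟨a, a.2.1⟩ ⟨b, b.2.1⟩
    obtain ⟨p⟩ := hr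
    have := (reach_aux hXY hedge _ _ p b.2.2).1 a.2.2
    convert this using 2
  · obtain ⟨x, hx⟩ := hne
    exact ⟨⟨x, hx⟩⟩

lemma conn_cross {G : SimpleGraph V} {S X Y : Set V} {w : V}
    (hXY : S ∩ X ∩ Y ⊆ {w})
    (hedge : ∀ x y, x ∈ S → y ∈ S → G.Adj x y → (x ∈ X ∧ y ∈ X) ∨ (x ∈ Y ∧ y ∈ Y))
    (hconn : (G.induce S).Connected) {x y : V} (hx : x ∈ S) (hx' : x ∈ X)
    (hy : y ∈ S) (hy'' : y ∉ X) : w ∈ S := by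
  obtain ⟨p⟩ := hconn.preconnected ⟨x, hx⟩ ⟨y, hy⟩
  exact cross_aux hXY hedge _ _ p hy'' hx'

lemma conn_split {G : SimpleGraph V} {S X Y : Set V} {w : V}
    (hS : S ⊆ X ∪ Y) (hXY : S ∩ X ∩ Y ⊆ {w}) (hw : w ∉ S)
    (hedge : ∀ x y, x ∈ S → y ∈ S → G.Adj x y → (x ∈ X ∧ y ∈ X) ∨ (x ∈ Y ∧ y ∈ Y))
    (hconn : (G.induce S).Connected) : S ⊆ X ∨ S ⊆ Y := by
  by_contra hc
  push_neg at hc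
  rw [Set.not_subset, Set.not_subset] at hc
  obtain ⟨⟨y, hyS, hyX⟩, ⟨x, hxS, hxY⟩⟩ := hc
  have hx' : x ∈ X := (hS hxS).resolve_right hxY
  exact hw (conn_cross hXY hedge hconn hxS hx' hyS hyX)

lemma conn_nonempty {G : SimpleGraph V} {S : Finset V}
    (h : (G.induce (↑S : Set V)).Connected) : S.Nonempty := by
  have := h.nonempty
  exact Finset.nonempty_coe_sort.mp this

noncomputable def induceIsoOfEquiv {G1 G2 : SimpleGraph V} (e : V ≃ V) {s : Set V}
    (h : ∀ x ∈ s, ∀ y ∈ s, (G1.Adj x y ↔ G2.Adj (e x) (e y))) :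
    G1.induce s ≃g G2.induce (e '' s) where
  toEquiv := Equiv.Set.image e s e.injective
  map_rel_iff' := by
    intro a b
    simp only [Equiv.Set.image, Equiv.Set.imageOfInjOn, Equiv.coe_fn_mk, comap_adj,
      Function.Embedding.coe_subtype]
    exact (h a a.2 b b.2).symm

lemma induce_congr {G1 G2 : SimpleGraph V} {s : Set V} (A : Set V) (hA : A ⊆ s)
    (h : ∀ x ∈ s, ∀ y ∈ s, (G1.Adj x y ↔ G2.Adj x y)) : G1.induce A = G2.induce A := by
  ext a b
  exact h _ (hA a.2) _ (hA b.2)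

noncomputable def induceInduceIso (G : SimpleGraph V) (s : Set V) (t : Set ↥s) :
    (G.induce s).induce t ≃g G.induce (Subtype.val '' t) where
  toEquiv := Equiv.Set.image Subtype.val t Subtype.val_injective
  map_rel_iff' := by
    intro a b
    simp only [Equiv.Set.image, Equiv.Set.imageOfInjOn, Equiv.coe_fn_mk, comap_adj,
      Function.Embedding.coe_subtype]

lemma card_subtype_filter [Fintype V] (P : Finset V → Prop) [DecidablePred P] :
    Nat.card {s : Finset V // P s} = (univ.filter P).card := by
  rw [Nat.card_eq_fintype_card, ← Fintype.card_coe]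
  exact Fintype.card_congr ((Equiv.subtypeEquivRight (by simp)).trans (Equiv.refl _))

lemma numCISat_induce [Fintype V] (G : SimpleGraph V) (s : Set V) (w : V) (hw : w ∈ s) :
    numCISat (G.induce s) ⟨w, hw⟩ =
      (univ.filter fun A : Finset V =>
        ↑A ⊆ s ∧ w ∈ A ∧ (G.induce (↑A : Set V)).Connected).card := by
  rw [numCISat]
  refine Eq.trans (Nat.card_congr ?_) (card_subtype_filter _)
  refine
    { toFun := fun t => ⟨t.1.image Subtype.val, ?_, ?_, ?_⟩
      invFun := fun A => ⟨A.1.subtype (· ∈ s), ?_, ?_⟩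
      left_inv := ?_
      right_inv := ?_ }
  · intro x hx
    simp only [coe_image, Set.mem_image, mem_coe] at hx
    obtain ⟨a, _, rfl⟩ := hx
    exact a.2
  · simp only [Finset.mem_image]
    exact ⟨⟨w, hw⟩, t.2.1, rfl⟩
  · have := (induceInduceIso G s ↑t.1).connected_iff
    rw [Finset.coe_image] at *
    exact this.mp t.2.2
  · simp only [Finset.mem_subtype]
    exact A.2.2.1
  · have hsub : (↑(A.1.subtype (· ∈ s)) : Set ↥s) = Subtype.val ⁻¹' ↑A.1 := by
      ext x; simp
    rw [hsub]
    have himg : Subtype.val '' (Subtype.val ⁻¹' (↑A.1 : Set V) : Set ↥s) = ↑A.1 := by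
      rw [Set.image_preimage_eq_inter_range, Subtype.range_coe]
      exact Set.inter_eq_left.mpr A.2.1
    have := (induceInduceIso G s (Subtype.val ⁻¹' ↑A.1)).connected_iff
    rw [himg] at this
    exact this.mpr A.2.2.2
  · intro t
    apply Subtype.ext
    ext x
    simp [Finset.mem_subtype, Finset.mem_image]
  · intro A
    apply Subtype.ext
    ext x
    simp only [Finset.mem_image, Finset.mem_subtype]
    constructor
    · rintro ⟨a, ha, rfl⟩; exact ha
    · intro hx; exact ⟨⟨x, A.2.1 hx⟩, hx, rfl⟩
lemma coe_filter_mem (S : Finset V) (X : Set V) :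
    (↑(S.filter (· ∈ X)) : Set V) = ↑S ∩ X := by
  ext x; simp

lemma count_glue_mul [Fintype V] {G : SimpleGraph V} {X Y : Set V} {w : V}
    (hXY : X ∩ Y = {w})
    (hedge : ∀ x y, x ∈ X ∪ Y → y ∈ X ∪ Y → G.Adj x y → (x ∈ X ∧ y ∈ X) ∨ (x ∈ Y ∧ y ∈ Y))
    (E : Finset V → Prop)
    (hE : ∀ S T : Finset V, S.filter (· ∈ Y) = T.filter (· ∈ Y) → (E S ↔ E T)) :
    (univ.filter fun S : Finset V =>
        ↑S ⊆ X ∪ Y ∧ w ∈ S ∧ (G.induce (↑S : Set V)).Connected ∧ E S).card =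
      (univ.filter fun A : Finset V =>
        ↑A ⊆ X ∧ w ∈ A ∧ (G.induce (↑A : Set V)).Connected).card *
      (univ.filter fun B : Finset V =>
        ↑B ⊆ Y ∧ w ∈ B ∧ (G.induce (↑B : Set V)).Connected ∧ E B).card := by
  have hwX : w ∈ X := by have : w ∈ X ∩ Y := hXY ▸ rfl; exact this.1
  have hwY : w ∈ Y := by have : w ∈ X ∩ Y := hXY ▸ rfl; exact this.2
  rw [← card_product]
  refine card_bij' (fun S _ => (S.filter (· ∈ X), S.filter (· ∈ Y)))
    (fun p _ => p.1 ∪ p.2) ?_ ?_ ?_ ?_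
  · -- hi : image in product
    intro S hS
    simp only [mem_filter, mem_univ, true_and] at hS
    obtain ⟨hsub, hwS, hconn, hES⟩ := hS
    simp only [mem_product, mem_filter, mem_univ, true_and]
    have hXYsub : (↑S : Set V) ∩ X ∩ Y ⊆ {w} := fun x hx => hXY ▸ Set.mem_inter hx.1.2 hx.2
    have hYXsub : (↑S : Set V) ∩ Y ∩ X ⊆ {w} := fun x hx => hXY ▸ Set.mem_inter hx.2 hx.1.2
    have hedge' : ∀ x y, x ∈ (↑S : Set V) → y ∈ (↑S : Set V) → G.Adj x y →
        (x ∈ X ∧ y ∈ X) ∨ (x ∈ Y ∧ y ∈ Y) := fun x y hx hy h => hedge x y (hsub hx) (hsub hy) h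
    refine ⟨⟨?_, ?_, ?_⟩, ?_, ?_, ?_, ?_⟩
    · rw [coe_filter_mem]; exact Set.inter_subset_right
    · exact ⟨hwS, hwX⟩
    · rw [coe_filter_mem]
      exact conn_project hXYsub hedge' hconn ⟨w, Finset.mem_coe.2 hwS, hwX⟩
    · rw [coe_filter_mem]; exact Set.inter_subset_right
    · exact ⟨hwS, hwY⟩
    · rw [coe_filter_mem]
      exact conn_project hYXsub (fun x y hx hy h => (hedge' x y hx hy h).symm) hconn
        ⟨w, Finset.mem_coe.2 hwS, hwY⟩
    · exact (hE S _ (by ext x; simp [Finset.mem_filter, and_assoc])).mp hES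
  · -- hj
    rintro ⟨A, B⟩ hp
    simp only [mem_product, mem_filter, mem_univ, true_and] at hp
    obtain ⟨⟨hAsub, hwA, hAconn⟩, hBsub, hwB, hBconn, hEB⟩ := hp
    simp only [mem_filter, mem_univ, true_and]
    refine ⟨?_, ?_, ?_, ?_⟩
    · rw [Finset.coe_union]; exact Set.union_subset_union hAsub hBsub
    · exact Finset.mem_union_left _ hwA
    · rw [Finset.coe_union]
      exact induce_union_connected hAconn.preconnected hBconn.preconnected ⟨w, Finset.mem_coe.2 hwA, Finset.mem_coe.2 hwB⟩
    · refine (hE _ B ?_).mpr hEB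
      ext x
      simp only [Finset.mem_filter, Finset.mem_union]
      constructor
      · rintro ⟨hx | hx, hxY⟩
        · have hxw : x ∈ ({w} : Set V) := hXY ▸ Set.mem_inter (hAsub hx) hxY
          rw [Set.mem_singleton_iff] at hxw
          exact ⟨hxw ▸ hwB, hxY⟩
        · exact ⟨hx, hxY⟩
      · exact fun ⟨hx, hxY⟩ => ⟨Or.inr hx, hxY⟩
  · -- left_inv
    intro S hS
    simp only [mem_filter, mem_univ, true_and] at hS
    ext x
    simp only [Finset.mem_union, Finset.mem_filter]
    constructor
    · rintro (⟨h, _⟩ | ⟨h, _⟩) <;> exact h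
    · intro hx
      rcases hS.1 hx with h | h
      · exact Or.inl ⟨hx, h⟩
      · exact Or.inr ⟨hx, h⟩
  · -- right_inv
    rintro ⟨A, B⟩ hp
    simp only [mem_product, mem_filter, mem_univ, true_and] at hp
    obtain ⟨⟨hAsub, hwA, _⟩, hBsub, hwB, _⟩ := hp
    have e1 : (A ∪ B).filter (· ∈ X) = A := by
      ext x
      simp only [Finset.mem_filter, Finset.mem_union]
      constructor
      · rintro ⟨hx | hx, hxX⟩
        · exact hx
        · have hxw : x ∈ ({w} : Set V) := hXY ▸ Set.mem_inter hxX (hBsub hx)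
          rw [Set.mem_singleton_iff] at hxw
          exact hxw ▸ hwA
      · exact fun hx => ⟨Or.inl hx, hAsub hx⟩
    have e2 : (A ∪ B).filter (· ∈ Y) = B := by
      ext x
      simp only [Finset.mem_filter, Finset.mem_union]
      constructor
      · rintro ⟨hx | hx, hxY⟩
        · have hxw : x ∈ ({w} : Set V) := hXY ▸ Set.mem_inter (hAsub hx) hxY
          rw [Set.mem_singleton_iff] at hxw
          exact hxw ▸ hwB
        · exact hx
      · exact fun hx => ⟨Or.inr hx, hBsub hx⟩
    simp [e1, e2]

lemma count_glue_add [Fintype V] {G : SimpleGraph V} {X Y : Set V} {w : V}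
    (hXY : X ∩ Y = {w})
    (hedge : ∀ x y, x ∈ X ∪ Y → y ∈ X ∪ Y → G.Adj x y → (x ∈ X ∧ y ∈ X) ∨ (x ∈ Y ∧ y ∈ Y))
    (E : Finset V → Prop) :
    (univ.filter fun S : Finset V =>
        ↑S ⊆ X ∪ Y ∧ w ∉ S ∧ (G.induce (↑S : Set V)).Connected ∧ E S).card =
      (univ.filter fun S : Finset V =>
        ↑S ⊆ X ∧ w ∉ S ∧ (G.induce (↑S : Set V)).Connected ∧ E S).card +
      (univ.filter fun S : Finset V =>
        ↑S ⊆ Y ∧ w ∉ S ∧ (G.induce (↑S : Set V)).Connected ∧ E S).card := by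
  rw [← card_union_of_disjoint]
  · congr 1
    ext S
    simp only [mem_union, mem_filter, mem_univ, true_and]
    constructor
    · rintro ⟨hsub, hw, hconn, hES⟩
      have hXYsub : (↑S : Set V) ∩ X ∩ Y ⊆ {w} := fun x hx => hXY ▸ Set.mem_inter hx.1.2 hx.2
      have hedge' : ∀ x y, x ∈ (↑S : Set V) → y ∈ (↑S : Set V) → G.Adj x y →
          (x ∈ X ∧ y ∈ X) ∨ (x ∈ Y ∧ y ∈ Y) := fun x y hx hy h => hedge x y (hsub hx) (hsub hy) h
      have hwS : w ∉ (↑S : Set V) := fun h => hw (Finset.mem_coe.1 h)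
      rcases conn_split hsub hXYsub hwS hedge' hconn with h | h
      · exact Or.inl ⟨h, hw, hconn, hES⟩
      · exact Or.inr ⟨h, hw, hconn, hES⟩
    · rintro (⟨hsub, hw, hconn, hES⟩ | ⟨hsub, hw, hconn, hES⟩)
      · exact ⟨hsub.trans Set.subset_union_left, hw, hconn, hES⟩
      · exact ⟨hsub.trans Set.subset_union_right, hw, hconn, hES⟩
  · rw [Finset.disjoint_left]
    rintro S hS1 hS2
    simp only [mem_filter, mem_univ, true_and] at hS1 hS2
    obtain ⟨hx1, hw1, hconn, _⟩ := hS1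
    obtain ⟨hx2, _, _, _⟩ := hS2
    obtain ⟨x, hx⟩ := conn_nonempty hconn
    have : x ∈ ({w} : Set V) := hXY ▸ Set.mem_inter (hx1 hx) (hx2 hx)
    rw [Set.mem_singleton_iff] at this
    exact hw1 (this ▸ hx)

lemma numCIS_filter {V : Type*} [Fintype V] (H : SimpleGraph V) :
    numCIS H = (univ.filter fun S : Finset V => (H.induce (↑S : Set V)).Connected).card := by
  rw [numCIS, card_subtype_filter]
  congr 1
  apply Finset.filter_congr
  intro S _
  exact ⟨fun h => h.2, fun h => ⟨conn_nonempty h, h⟩⟩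

lemma nrm {V : Type*} [Fintype V] {P Q : Finset V → Prop} [DecidablePred P] [DecidablePred Q]
    (h : ∀ S, P S ↔ Q S) : (univ.filter P).card = (univ.filter Q).card := by
  congr 1
  exact Finset.filter_congr fun S _ => h S

lemma csplit {V : Type*} [Fintype V] (P Q : Finset V → Prop) [DecidablePred P] [DecidablePred Q] :
    (univ.filter P).card =
      (univ.filter fun S => P S ∧ Q S).card + (univ.filter fun S => P S ∧ ¬ Q S).card := by
  rw [← Finset.filter_filter, ← Finset.filter_filter,
    Finset.card_filter_add_card_filter_not]

lemma count_swap {V : Type*} [Fintype V] {G1 G2 : SimpleGraph V} (e : V ≃ V) {s1 s2 : Set V}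
    {w1 w2 : V} (hs : e '' s1 = s2) (hw : e w1 = w2)
    (hadj : ∀ x ∈ s1, ∀ y ∈ s1, (G1.Adj x y ↔ G2.Adj (e x) (e y))) :
    (univ.filter fun C : Finset V =>
        ↑C ⊆ s1 ∧ w1 ∈ C ∧ (G1.induce (↑C : Set V)).Connected).card =
      (univ.filter fun C : Finset V =>
        ↑C ⊆ s2 ∧ w2 ∈ C ∧ (G2.induce (↑C : Set V)).Connected).card := by
  refine card_bij' (fun C _ => C.image e) (fun C _ => C.image e.symm) ?_ ?_ ?_ ?_
  · intro C hC
    simp only [mem_filter, mem_univ, true_and] at hC ⊢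
    obtain ⟨hsub, hwC, hconn⟩ := hC
    refine ⟨?_, ?_, ?_⟩
    · rw [coe_image, ← hs]
      exact Set.image_mono hsub
    · rw [Finset.mem_image]
      exact ⟨w1, hwC, hw⟩
    · have hiso := induceIsoOfEquiv e (fun x hx y hy => hadj x (hsub hx) y (hsub hy))
      rw [coe_image]
      exact hiso.connected_iff.mp hconn
  · intro C hC
    simp only [mem_filter, mem_univ, true_and] at hC ⊢
    obtain ⟨hsub, hwC, hconn⟩ := hC
    have hs' : e.symm '' s2 = s1 := by rw [← hs, Equiv.symm_image_image]
    have hadj' : ∀ x ∈ s2, ∀ y ∈ s2, (G2.Adj x y ↔ G1.Adj (e.symm x) (e.symm y)) := by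
      intro x hx y hy
      have hx1 : e.symm x ∈ s1 := by rw [← hs'] ; exact Set.mem_image_of_mem _ hx
      have hy1 : e.symm y ∈ s1 := by rw [← hs'] ; exact Set.mem_image_of_mem _ hy
      have := hadj _ hx1 _ hy1
      simp only [Equiv.apply_symm_apply] at this
      exact this.symm
    refine ⟨?_, ?_, ?_⟩
    · rw [coe_image, ← hs']
      exact Set.image_mono hsub
    · rw [Finset.mem_image]
      exact ⟨w2, hwC, by rw [← hw, Equiv.symm_apply_apply]⟩
    · have hiso := induceIsoOfEquiv e.symm (fun x hx y hy => hadj' x (hsub hx) y (hsub hy))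
      rw [coe_image]
      exact hiso.connected_iff.mp hconn
  · intro C _
    ext x
    simp [Finset.mem_image]
  · intro C _
    ext x
    simp [Finset.mem_image]

noncomputable def cnt {V : Type*} [Fintype V] (P : Finset V → Prop) : ℕ :=
  Nat.card {S : Finset V // P S}

variable [Fintype V]

lemma cnt_congr {P Q : Finset V → Prop} (h : ∀ S, P S ↔ Q S) : cnt P = cnt Q :=
  Nat.card_congr (Equiv.subtypeEquivRight h)

lemma cnt_eq_filter (P : Finset V → Prop) [DecidablePred P] :
    cnt P = (univ.filter P).card := card_subtype_filter P

lemma cnt_zero {P : Finset V → Prop} (h : ∀ S, ¬ P S) : cnt P = 0 := by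
  haveI : IsEmpty {S : Finset V // P S} := ⟨fun x => h x.1 x.2⟩
  exact Nat.card_of_isEmpty

lemma one_le_cnt {P : Finset V → Prop} (S0 : Finset V) (h : P S0) : 1 ≤ cnt P := by
  classical
  rw [cnt_eq_filter]
  exact Finset.card_pos.mpr ⟨S0, Finset.mem_filter.mpr ⟨Finset.mem_univ _, h⟩⟩

lemma two_le_cnt {P : Finset V → Prop} (S0 S1 : Finset V) (h0 : P S0) (h1 : P S1)
    (hne : S0 ≠ S1) : 2 ≤ cnt P := by
  classical
  rw [cnt_eq_filter]
  exact Finset.one_lt_card.mpr ⟨S0, Finset.mem_filter.mpr ⟨Finset.mem_univ _, h0⟩,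
    S1, Finset.mem_filter.mpr ⟨Finset.mem_univ _, h1⟩, hne⟩

lemma cnt_split (P Q : Finset V → Prop) :
    cnt P = cnt (fun S => P S ∧ Q S) + cnt (fun S => P S ∧ ¬ Q S) := by
  classical
  rw [cnt_eq_filter, cnt_eq_filter, cnt_eq_filter]
  exact csplit P Q

lemma cnt_glue_mul {G : SimpleGraph V} {X Y : Set V} {w : V}
    (hXY : X ∩ Y = {w})
    (hedge : ∀ x y, x ∈ X ∪ Y → y ∈ X ∪ Y → G.Adj x y → (x ∈ X ∧ y ∈ X) ∨ (x ∈ Y ∧ y ∈ Y))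
    (E : Finset V → Prop)
    (hE : ∀ S T : Finset V, S.filter (· ∈ Y) = T.filter (· ∈ Y) → (E S ↔ E T)) :
    cnt (fun S : Finset V =>
        ↑S ⊆ X ∪ Y ∧ w ∈ S ∧ (G.induce (↑S : Set V)).Connected ∧ E S) =
      cnt (fun A : Finset V => ↑A ⊆ X ∧ w ∈ A ∧ (G.induce (↑A : Set V)).Connected) *
      cnt (fun B : Finset V => ↑B ⊆ Y ∧ w ∈ B ∧ (G.induce (↑B : Set V)).Connected ∧ E B) := by
  classical
  rw [cnt_eq_filter, cnt_eq_filter, cnt_eq_filter]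
  exact count_glue_mul hXY hedge E hE

lemma cnt_glue_add {G : SimpleGraph V} {X Y : Set V} {w : V}
    (hXY : X ∩ Y = {w})
    (hedge : ∀ x y, x ∈ X ∪ Y → y ∈ X ∪ Y → G.Adj x y → (x ∈ X ∧ y ∈ X) ∨ (x ∈ Y ∧ y ∈ Y))
    (E : Finset V → Prop) :
    cnt (fun S : Finset V =>
        ↑S ⊆ X ∪ Y ∧ w ∉ S ∧ (G.induce (↑S : Set V)).Connected ∧ E S) =
      cnt (fun S : Finset V => ↑S ⊆ X ∧ w ∉ S ∧ (G.induce (↑S : Set V)).Connected ∧ E S) +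
      cnt (fun S : Finset V => ↑S ⊆ Y ∧ w ∉ S ∧ (G.induce (↑S : Set V)).Connected ∧ E S) := by
  classical
  rw [cnt_eq_filter, cnt_eq_filter, cnt_eq_filter]
  exact count_glue_add hXY hedge E

lemma cnt_swap {G1 G2 : SimpleGraph V} (e : V ≃ V) {s1 s2 : Set V}
    {w1 w2 : V} (hs : e '' s1 = s2) (hw : e w1 = w2)
    (hadj : ∀ x ∈ s1, ∀ y ∈ s1, (G1.Adj x y ↔ G2.Adj (e x) (e y))) :
    cnt (fun C : Finset V => ↑C ⊆ s1 ∧ w1 ∈ C ∧ (G1.induce (↑C : Set V)).Connected) =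
      cnt (fun C : Finset V => ↑C ⊆ s2 ∧ w2 ∈ C ∧ (G2.induce (↑C : Set V)).Connected) := by
  classical
  rw [cnt_eq_filter, cnt_eq_filter]
  exact count_swap e hs hw hadj

lemma numCIS_cnt (H : SimpleGraph V) :
    numCIS H = cnt (fun S : Finset V => (H.induce (↑S : Set V)).Connected) := by
  classical
  rw [cnt_eq_filter]
  exact numCIS_filter H

lemma numCISat_cnt (G : SimpleGraph V) (s : Set V) (w : V) (hw : w ∈ s) :
    numCISat (G.induce s) ⟨w, hw⟩ =
      cnt (fun A : Finset V => ↑A ⊆ s ∧ w ∈ A ∧ (G.induce (↑A : Set V)).Connected) := by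
  classical
  rw [cnt_eq_filter]
  exact numCISat_induce G s w hw

end CISAux

open CISAux Finset in
set_option maxHeartbeats 2000000 in
/-- Lemma on merging: `G` decomposes into connected pieces `L = G.induce SL`,
`M = G.induce SM`, `R = G.induce SR` (each with at least two vertices), overlapping only
in `SL ∩ SM = {u}` and `SM ∩ SR = {v}`.  Let `G'` be the graph in which `R` is
re-attached at `u` instead of `v`, and `G''` the graph in which `L` is re-attached at
`v` instead of `u`.  Then
`N(G') - N(G) = (N(R)_r - 1)(N(L)_l·N(M-v)_u - N(M-u)_v)` and
`N(G'') - N(G) = (N(L)_l - 1)(N(R)_r·N(M-u)_v - N(M-v)_u)`; consequently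
`N(G') > N(G)` or `N(G'') > N(G)`. -/
theorem numCIS_reattach {V : Type*} [Fintype V] (G : SimpleGraph V) (SL SM SR : Set V)
    (u v : V) (huv : u ≠ v)
    (hcover : SL ∪ SM ∪ SR = Set.univ)
    (hLM : SL ∩ SM = {u}) (hMR : SM ∩ SR = {v}) (hLR : SL ∩ SR = ∅)
    (huL : u ∈ SL) (huM : u ∈ SM) (hvM : v ∈ SM) (hvR : v ∈ SR)
    (hedges : ∀ x y, G.Adj x y →
      (x ∈ SL ∧ y ∈ SL) ∨ (x ∈ SM ∧ y ∈ SM) ∨ (x ∈ SR ∧ y ∈ SR))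
    (hL : (G.induce SL).Connected) (hM : (G.induce SM).Connected)
    (hR : (G.induce SR).Connected)
    (hLcard : 2 ≤ Nat.card SL) (hMcard : 2 ≤ Nat.card SM) (hRcard : 2 ≤ Nat.card SR) :
    let G' : SimpleGraph V := SimpleGraph.fromRel (fun x y =>
      (x ∈ SL ∧ y ∈ SL ∧ G.Adj x y) ∨ (x ∈ SM ∧ y ∈ SM ∧ G.Adj x y) ∨
      (x ∈ SR ∧ y ∈ SR ∧ x ≠ v ∧ y ≠ v ∧ G.Adj x y) ∨
      (x = u ∧ y ∈ SR ∧ G.Adj v y));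
    let G'' : SimpleGraph V := SimpleGraph.fromRel (fun x y =>
      (x ∈ SL ∧ y ∈ SL ∧ x ≠ u ∧ y ≠ u ∧ G.Adj x y) ∨
      (x ∈ SM ∧ y ∈ SM ∧ G.Adj x y) ∨ (x ∈ SR ∧ y ∈ SR ∧ G.Adj x y) ∨
      (x = v ∧ y ∈ SL ∧ G.Adj u y));
    ((numCIS G' : ℤ) - numCIS G =
        ((numCISat (G.induce SR) ⟨v, hvR⟩ : ℤ) - 1) *
          ((numCISat (G.induce SL) ⟨u, huL⟩ : ℤ) *
              numCISat (G.induce (SM \ {v})) ⟨u, ⟨huM, huv⟩⟩ -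
            numCISat (G.induce (SM \ {u})) ⟨v, ⟨hvM, fun h => huv h.symm⟩⟩)) ∧
    ((numCIS G'' : ℤ) - numCIS G =
        ((numCISat (G.induce SL) ⟨u, huL⟩ : ℤ) - 1) *
          ((numCISat (G.induce SR) ⟨v, hvR⟩ : ℤ) *
              numCISat (G.induce (SM \ {u})) ⟨v, ⟨hvM, fun h => huv h.symm⟩⟩ -
            numCISat (G.induce (SM \ {v})) ⟨u, ⟨huM, huv⟩⟩)) ∧
    (numCIS G < numCIS G' ∨ numCIS G < numCIS G'') := by
  classical
  intro G' G''
  -- basic membership facts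
  have hLMu : ∀ x, x ∈ SL → x ∈ SM → x = u := by
    intro x h1 h2
    have : x ∈ ({u} : Set V) := by rw [← hLM]; exact ⟨h1, h2⟩
    exact this
  have hMRv : ∀ x, x ∈ SM → x ∈ SR → x = v := by
    intro x h1 h2
    have : x ∈ ({v} : Set V) := by rw [← hMR]; exact ⟨h1, h2⟩
    exact this
  have hLRf : ∀ x, x ∈ SL → x ∈ SR → False := by
    intro x h1 h2
    have : x ∈ (∅ : Set V) := by rw [← hLR]; exact ⟨h1, h2⟩
    exact this
  have hvL : v ∉ SL := fun h => huv (hLMu v h hvM).symm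
  have huR : u ∉ SR := fun h => hLRf u huL h
  have hneu : ∀ x, x ∈ SR → x ≠ u := fun x hx (e : x = u) => huR (e ▸ hx)
  have hnev : ∀ x, x ∈ SL → x ≠ v := fun x hx (e : x = v) => hvL (e ▸ hx)
  set SR' : Set V := SR \ {v} ∪ {u} with hSR'def
  set SL' : Set V := SL \ {u} ∪ {v} with hSL'def
  have huSR' : u ∈ SR' := Or.inr rfl
  have hvSL' : v ∈ SL' := Or.inr rfl
  have hmemSR' : ∀ x, x ∈ SR' → x = u ∨ (x ∈ SR ∧ x ≠ v) := by
    intro x hx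
    rcases hx with ⟨h1, h2⟩ | h
    · exact Or.inr ⟨h1, h2⟩
    · exact Or.inl h
  have hmemSL' : ∀ x, x ∈ SL' → x = v ∨ (x ∈ SL ∧ x ≠ u) := by
    intro x hx
    rcases hx with ⟨h1, h2⟩ | h
    · exact Or.inr ⟨h1, h2⟩
    · exact Or.inl h
  -- adjacency of G'
  have hG'adj : ∀ x y : V, G'.Adj x y ↔ x ≠ y ∧
      (((x ∈ SL ∧ y ∈ SL ∧ G.Adj x y) ∨ (x ∈ SM ∧ y ∈ SM ∧ G.Adj x y) ∨
        (x ∈ SR ∧ y ∈ SR ∧ x ≠ v ∧ y ≠ v ∧ G.Adj x y) ∨ (x = u ∧ y ∈ SR ∧ G.Adj v y)) ∨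
       ((y ∈ SL ∧ x ∈ SL ∧ G.Adj y x) ∨ (y ∈ SM ∧ x ∈ SM ∧ G.Adj y x) ∨
        (y ∈ SR ∧ x ∈ SR ∧ y ≠ v ∧ x ≠ v ∧ G.Adj y x) ∨ (y = u ∧ x ∈ SR ∧ G.Adj v x))) :=
    fun x y => SimpleGraph.fromRel_adj _ x y
  have hG''adj : ∀ x y : V, G''.Adj x y ↔ x ≠ y ∧
      (((x ∈ SL ∧ y ∈ SL ∧ x ≠ u ∧ y ≠ u ∧ G.Adj x y) ∨ (x ∈ SM ∧ y ∈ SM ∧ G.Adj x y) ∨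
        (x ∈ SR ∧ y ∈ SR ∧ G.Adj x y) ∨ (x = v ∧ y ∈ SL ∧ G.Adj u y)) ∨
       ((y ∈ SL ∧ x ∈ SL ∧ y ≠ u ∧ x ≠ u ∧ G.Adj y x) ∨ (y ∈ SM ∧ x ∈ SM ∧ G.Adj y x) ∨
        (y ∈ SR ∧ x ∈ SR ∧ G.Adj y x) ∨ (y = v ∧ x ∈ SL ∧ G.Adj u x))) :=
    fun x y => SimpleGraph.fromRel_adj _ x y
  have hA1 : ∀ x ∈ SL, ∀ y ∈ SL, (G'.Adj x y ↔ G.Adj x y) := by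
    intro x hx y hy
    rw [hG'adj]
    constructor
    · rintro ⟨hne, h | h⟩
      · rcases h with ⟨_, _, h⟩ | ⟨hxM, hyM, h⟩ | ⟨hxR, _⟩ | ⟨rfl, hyR, _⟩
        · exact h
        · exact absurd ((hLMu x hx hxM).trans (hLMu y hy hyM).symm) hne
        · exact (hLRf x hx hxR).elim
        · exact (hLRf y hy hyR).elim
      · rcases h with ⟨_, _, h⟩ | ⟨hyM, hxM, h⟩ | ⟨hyR, _⟩ | ⟨rfl, hxR, _⟩
        · exact h.symm
        · exact absurd ((hLMu x hx hxM).trans (hLMu y hy hyM).symm) hne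
        · exact (hLRf y hy hyR).elim
        · exact (hLRf x hx hxR).elim
    · intro h
      exact ⟨h.ne, Or.inl (Or.inl ⟨hx, hy, h⟩)⟩
  have hA2 : ∀ x ∈ SM, ∀ y ∈ SM, (G'.Adj x y ↔ G.Adj x y) := by
    intro x hx y hy
    rw [hG'adj]
    constructor
    · rintro ⟨hne, h | h⟩
      · rcases h with ⟨hxL, hyL, _⟩ | ⟨_, _, h⟩ | ⟨hxR, _, hxv, _⟩ | ⟨rfl, hyR, h⟩
        · exact absurd ((hLMu x hxL hx).trans (hLMu y hyL hy).symm) hne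
        · exact h
        · exact absurd (hMRv x hx hxR) hxv
        · rw [hMRv y hy hyR] at h; exact absurd rfl h.ne
      · rcases h with ⟨hyL, hxL, _⟩ | ⟨_, _, h⟩ | ⟨hyR, _, hyv, _⟩ | ⟨rfl, hxR, h⟩
        · exact absurd ((hLMu x hxL hx).trans (hLMu y hyL hy).symm) hne
        · exact h.symm
        · exact absurd (hMRv y hy hyR) hyv
        · rw [hMRv x hx hxR] at h; exact absurd rfl h.ne
    · intro h
      exact ⟨h.ne, Or.inl (Or.inr (Or.inl ⟨hx, hy, h⟩))⟩
  have hA3 : ∀ x, x ∈ SR → x ≠ v → ∀ y, y ∈ SR → y ≠ v → (G'.Adj x y ↔ G.Adj x y) := by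
    intro x hx hxv y hy hyv
    rw [hG'adj]
    constructor
    · rintro ⟨hne, h | h⟩
      · rcases h with ⟨hxL, _⟩ | ⟨hxM, _⟩ | ⟨_, _, _, _, h⟩ | ⟨rfl, _, _⟩
        · exact (hLRf x hxL hx).elim
        · exact absurd (hMRv x hxM hx) hxv
        · exact h
        · exact (huR hx).elim
      · rcases h with ⟨hyL, _⟩ | ⟨hyM, _⟩ | ⟨_, _, _, _, h⟩ | ⟨rfl, _, _⟩
        · exact (hLRf y hyL hy).elim
        · exact absurd (hMRv y hyM hy) hyv
        · exact h.symm
        · exact (huR hy).elim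
    · intro h
      exact ⟨h.ne, Or.inl (Or.inr (Or.inr (Or.inl ⟨hx, hy, hxv, hyv, h⟩)))⟩
  have hA4 : ∀ y, y ∈ SR → y ≠ v → (G'.Adj u y ↔ G.Adj v y) := by
    intro y hy hyv
    rw [hG'adj]
    constructor
    · rintro ⟨hne, h | h⟩
      · rcases h with ⟨_, hyL, _⟩ | ⟨_, hyM, _⟩ | ⟨huRR, _⟩ | ⟨_, _, h⟩
        · exact (hLRf y hyL hy).elim
        · exact absurd (hMRv y hyM hy) hyv
        · exact (huR huRR).elim
        · exact h
      · rcases h with ⟨hyL, _⟩ | ⟨hyM, _⟩ | ⟨_, huRR, _⟩ | ⟨rfl, huRR, _⟩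
        · exact (hLRf y hyL hy).elim
        · exact absurd (hMRv y hyM hy) hyv
        · exact (huR huRR).elim
        · exact (huR huRR).elim
    · intro h
      refine ⟨fun e => huR (by rw [e]; exact hy), Or.inl (Or.inr (Or.inr (Or.inr ⟨rfl, hy, h⟩)))⟩
  have hedgeG' : ∀ x y, G'.Adj x y →
      (x ∈ SL ∧ y ∈ SL) ∨ (x ∈ SM ∧ y ∈ SM) ∨ (x ∈ SR' ∧ y ∈ SR') := by
    intro x y hxy
    rw [hG'adj] at hxy
    obtain ⟨hne, h | h⟩ := hxy
    · rcases h with ⟨h1, h2, _⟩ | ⟨h1, h2, _⟩ | ⟨h1, h2, h3, h4, _⟩ | ⟨rfl, h2, h⟩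
      · exact Or.inl ⟨h1, h2⟩
      · exact Or.inr (Or.inl ⟨h1, h2⟩)
      · exact Or.inr (Or.inr ⟨Or.inl ⟨h1, h3⟩, Or.inl ⟨h2, h4⟩⟩)
      · exact Or.inr (Or.inr ⟨Or.inr rfl, Or.inl ⟨h2, h.ne'⟩⟩)
    · rcases h with ⟨h1, h2, _⟩ | ⟨h1, h2, _⟩ | ⟨h1, h2, h3, h4, _⟩ | ⟨rfl, h2, h⟩
      · exact Or.inl ⟨h2, h1⟩
      · exact Or.inr (Or.inl ⟨h2, h1⟩)
      · exact Or.inr (Or.inr ⟨Or.inl ⟨h2, h4⟩, Or.inl ⟨h1, h3⟩⟩)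
      · exact Or.inr (Or.inr ⟨Or.inl ⟨h2, h.ne'⟩, Or.inr rfl⟩)
  have hB1 : ∀ x ∈ SM, ∀ y ∈ SM, (G''.Adj x y ↔ G.Adj x y) := by
    intro x hx y hy
    rw [hG''adj]
    constructor
    · rintro ⟨hne, h | h⟩
      · rcases h with ⟨hxL, _, hxu, _⟩ | ⟨_, _, h⟩ | ⟨hxR, hyR, _⟩ | ⟨rfl, hyL, h⟩
        · exact absurd (hLMu x hxL hx) hxu
        · exact h
        · exact absurd ((hMRv x hx hxR).trans (hMRv y hy hyR).symm) hne
        · rw [hLMu y hyL hy] at h; exact absurd rfl h.ne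
      · rcases h with ⟨hyL, _, hyu, _⟩ | ⟨_, _, h⟩ | ⟨hyR, hxR, _⟩ | ⟨rfl, hxL, h⟩
        · exact absurd (hLMu y hyL hy) hyu
        · exact h.symm
        · exact absurd ((hMRv x hx hxR).trans (hMRv y hy hyR).symm) hne
        · rw [hLMu x hxL hx] at h; exact absurd rfl h.ne
    · intro h
      exact ⟨h.ne, Or.inl (Or.inr (Or.inl ⟨hx, hy, h⟩))⟩
  have hB2 : ∀ x ∈ SR, ∀ y ∈ SR, (G''.Adj x y ↔ G.Adj x y) := by
    intro x hx y hy
    rw [hG''adj]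
    constructor
    · rintro ⟨hne, h | h⟩
      · rcases h with ⟨hxL, _⟩ | ⟨hxM, hyM, _⟩ | ⟨_, _, h⟩ | ⟨rfl, hyL, _⟩
        · exact (hLRf x hxL hx).elim
        · exact absurd ((hMRv x hxM hx).trans (hMRv y hyM hy).symm) hne
        · exact h
        · exact (hLRf y hyL hy).elim
      · rcases h with ⟨hyL, _⟩ | ⟨hyM, hxM, _⟩ | ⟨_, _, h⟩ | ⟨rfl, hxL, _⟩
        · exact (hLRf y hyL hy).elim
        · exact absurd ((hMRv x hxM hx).trans (hMRv y hyM hy).symm) hne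
        · exact h.symm
        · exact (hLRf x hxL hx).elim
    · intro h
      exact ⟨h.ne, Or.inl (Or.inr (Or.inr (Or.inl ⟨hx, hy, h⟩)))⟩
  have hB3 : ∀ x, x ∈ SL → x ≠ u → ∀ y, y ∈ SL → y ≠ u → (G''.Adj x y ↔ G.Adj x y) := by
    intro x hx hxu y hy hyu
    rw [hG''adj]
    constructor
    · rintro ⟨hne, h | h⟩
      · rcases h with ⟨_, _, _, _, h⟩ | ⟨hxM, _⟩ | ⟨hxR, _⟩ | ⟨rfl, _, _⟩
        · exact h
        · exact absurd (hLMu x hx hxM) hxu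
        · exact (hLRf x hx hxR).elim
        · exact (hvL hx).elim
      · rcases h with ⟨_, _, _, _, h⟩ | ⟨hyM, _⟩ | ⟨hyR, _⟩ | ⟨rfl, _, _⟩
        · exact h.symm
        · exact absurd (hLMu y hy hyM) hyu
        · exact (hLRf y hy hyR).elim
        · exact (hvL hy).elim
    · intro h
      exact ⟨h.ne, Or.inl (Or.inl ⟨hx, hy, hxu, hyu, h⟩)⟩
  have hB4 : ∀ y, y ∈ SL → y ≠ u → (G''.Adj v y ↔ G.Adj u y) := by
    intro y hy hyu
    rw [hG''adj]
    constructor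
    · rintro ⟨hne, h | h⟩
      · rcases h with ⟨hvLL, _⟩ | ⟨_, hyM, _⟩ | ⟨_, hyR, _⟩ | ⟨_, _, h⟩
        · exact (hvL hvLL).elim
        · exact absurd (hLMu y hy hyM) hyu
        · exact (hLRf y hy hyR).elim
        · exact h
      · rcases h with ⟨_, hvLL, _⟩ | ⟨hyM, _, _⟩ | ⟨hyR, _⟩ | ⟨rfl, hvLL, _⟩
        · exact (hvL hvLL).elim
        · exact absurd (hLMu y hy hyM) hyu
        · exact (hLRf y hy hyR).elim
        · exact (hvL hvLL).elim
    · intro h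
      refine ⟨fun e => hvL (by rw [e]; exact hy), Or.inl (Or.inr (Or.inr (Or.inr ⟨rfl, hy, h⟩)))⟩
  have hedgeG'' : ∀ x y, G''.Adj x y →
      (x ∈ SL' ∧ y ∈ SL') ∨ (x ∈ SM ∧ y ∈ SM) ∨ (x ∈ SR ∧ y ∈ SR) := by
    intro x y hxy
    rw [hG''adj] at hxy
    obtain ⟨hne, h | h⟩ := hxy
    · rcases h with ⟨h1, h2, h3, h4, _⟩ | ⟨h1, h2, _⟩ | ⟨h1, h2, _⟩ | ⟨rfl, h2, h⟩
      · exact Or.inl ⟨Or.inl ⟨h1, h3⟩, Or.inl ⟨h2, h4⟩⟩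
      · exact Or.inr (Or.inl ⟨h1, h2⟩)
      · exact Or.inr (Or.inr ⟨h1, h2⟩)
      · exact Or.inl ⟨Or.inr rfl, Or.inl ⟨h2, h.ne'⟩⟩
    · rcases h with ⟨h1, h2, h3, h4, _⟩ | ⟨h1, h2, _⟩ | ⟨h1, h2, _⟩ | ⟨rfl, h2, h⟩
      · exact Or.inl ⟨Or.inl ⟨h2, h4⟩, Or.inl ⟨h1, h3⟩⟩
      · exact Or.inr (Or.inl ⟨h2, h1⟩)
      · exact Or.inr (Or.inr ⟨h2, h1⟩)
      · exact Or.inl ⟨Or.inl ⟨h2, h.ne'⟩, Or.inr rfl⟩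
  -- intersection facts
  have hXY1 : (SL ∪ SM) ∩ SR = {v} := by
    rw [Set.union_inter_distrib_right, hLR, hMR, Set.empty_union]
  have hXY1' : SL ∩ (SM ∪ SR') = {u} := by
    ext x
    constructor
    · rintro ⟨hxL, hxM | hxR'⟩
      · exact hLMu x hxL hxM
      · rcases hmemSR' x hxR' with rfl | ⟨hxR, _⟩
        · rfl
        · exact (hLRf x hxL hxR).elim
    · rintro rfl
      exact ⟨huL, Or.inl huM⟩
  have hXY2' : SM ∩ SR' = {u} := by
    ext x
    constructor
    · rintro ⟨hxM, hxR'⟩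
      rcases hmemSR' x hxR' with rfl | ⟨hxR, hxv⟩
      · rfl
      · exact (hxv (hMRv x hxM hxR)).elim
    · rintro rfl
      exact ⟨huM, huSR'⟩
  have hXY1'' : SR ∩ (SM ∪ SL') = {v} := by
    ext x
    constructor
    · rintro ⟨hxR, hxM | hxL'⟩
      · exact hMRv x hxM hxR
      · rcases hmemSL' x hxL' with rfl | ⟨hxL, _⟩
        · rfl
        · exact (hLRf x hxL hxR).elim
    · rintro rfl
      exact ⟨hvR, Or.inl hvM⟩
  have hXY2'' : SM ∩ SL' = {v} := by
    ext x
    constructor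
    · rintro ⟨hxM, hxL'⟩
      rcases hmemSL' x hxL' with rfl | ⟨hxL, hxu⟩
      · rfl
      · exact (hxu (hLMu x hxL hxM)).elim
    · rintro rfl
      exact ⟨hvM, hvSL'⟩
  have huniv : ∀ x : V, x ∈ (SL ∪ SM) ∪ SR := fun x => by rw [hcover]; trivial
  have huniv' : ∀ x : V, x ∈ SL ∪ (SM ∪ SR') := by
    intro x
    rcases huniv x with (h | h) | h
    · exact Or.inl h
    · exact Or.inr (Or.inl h)
    · by_cases hx : x = v
      · exact Or.inr (Or.inl (hx ▸ hvM))
      · exact Or.inr (Or.inr (Or.inl ⟨h, hx⟩))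
  have huniv'' : ∀ x : V, x ∈ SR ∪ (SM ∪ SL') := by
    intro x
    rcases huniv x with (h | h) | h
    · by_cases hx : x = u
      · exact Or.inr (Or.inl (hx ▸ huM))
      · exact Or.inr (Or.inr (Or.inl ⟨h, hx⟩))
    · exact Or.inr (Or.inl h)
    · exact Or.inl h
  -- guarded edge-classification instances
  have hedgeA : ∀ x y, x ∈ (SL ∪ SM) ∪ SR → y ∈ (SL ∪ SM) ∪ SR → G.Adj x y →
      (x ∈ SL ∪ SM ∧ y ∈ SL ∪ SM) ∨ (x ∈ SR ∧ y ∈ SR) := by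
    intro x y _ _ h
    rcases hedges x y h with ⟨h1, h2⟩ | ⟨h1, h2⟩ | ⟨h1, h2⟩
    · exact Or.inl ⟨Or.inl h1, Or.inl h2⟩
    · exact Or.inl ⟨Or.inr h1, Or.inr h2⟩
    · exact Or.inr ⟨h1, h2⟩
  have hedgeB : ∀ x y, x ∈ SL ∪ SM → y ∈ SL ∪ SM → G.Adj x y →
      (x ∈ SL ∧ y ∈ SL) ∨ (x ∈ SM ∧ y ∈ SM) := by
    intro x y hx hy h
    rcases hedges x y h with ⟨h1, h2⟩ | ⟨h1, h2⟩ | ⟨h1, h2⟩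
    · exact Or.inl ⟨h1, h2⟩
    · exact Or.inr ⟨h1, h2⟩
    · exfalso
      have hxv : x = v := by
        rcases hx with hh | hh
        · exact (hLRf x hh h1).elim
        · exact hMRv x hh h1
      have hyv : y = v := by
        rcases hy with hh | hh
        · exact (hLRf y hh h2).elim
        · exact hMRv y hh h2
      rw [hxv, hyv] at h
      exact h.ne rfl
  have hedgeA' : ∀ x y, x ∈ SL ∪ (SM ∪ SR') → y ∈ SL ∪ (SM ∪ SR') → G'.Adj x y →
      (x ∈ SL ∧ y ∈ SL) ∨ (x ∈ SM ∪ SR' ∧ y ∈ SM ∪ SR') := by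
    intro x y _ _ h
    rcases hedgeG' x y h with ⟨h1, h2⟩ | ⟨h1, h2⟩ | ⟨h1, h2⟩
    · exact Or.inl ⟨h1, h2⟩
    · exact Or.inr ⟨Or.inl h1, Or.inl h2⟩
    · exact Or.inr ⟨Or.inr h1, Or.inr h2⟩
  have hmemMR'u : ∀ x, x ∈ SL → x ∈ SM ∪ SR' → x = u := by
    intro x hxL hx
    rcases hx with hh | hh
    · exact hLMu x hxL hh
    · rcases hmemSR' x hh with rfl | ⟨hxR, _⟩
      · rfl
      · exact (hLRf x hxL hxR).elim
  have hedgeB' : ∀ x y, x ∈ SM ∪ SR' → y ∈ SM ∪ SR' → G'.Adj x y →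
      (x ∈ SM ∧ y ∈ SM) ∨ (x ∈ SR' ∧ y ∈ SR') := by
    intro x y hx hy h
    rcases hedgeG' x y h with ⟨h1, h2⟩ | ⟨h1, h2⟩ | ⟨h1, h2⟩
    · exact absurd ((hmemMR'u x h1 hx).trans (hmemMR'u y h2 hy).symm) h.ne
    · exact Or.inl ⟨h1, h2⟩
    · exact Or.inr ⟨h1, h2⟩
  have hedgeA'' : ∀ x y, x ∈ SR ∪ (SM ∪ SL') → y ∈ SR ∪ (SM ∪ SL') → G''.Adj x y →
      (x ∈ SR ∧ y ∈ SR) ∨ (x ∈ SM ∪ SL' ∧ y ∈ SM ∪ SL') := by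
    intro x y _ _ h
    rcases hedgeG'' x y h with ⟨h1, h2⟩ | ⟨h1, h2⟩ | ⟨h1, h2⟩
    · exact Or.inr ⟨Or.inr h1, Or.inr h2⟩
    · exact Or.inr ⟨Or.inl h1, Or.inl h2⟩
    · exact Or.inl ⟨h1, h2⟩
  have hmemML'v : ∀ x, x ∈ SR → x ∈ SM ∪ SL' → x = v := by
    intro x hxR hx
    rcases hx with hh | hh
    · exact hMRv x hh hxR
    · rcases hmemSL' x hh with rfl | ⟨hxL, _⟩
      · rfl
      · exact (hLRf x hxL hxR).elim
  have hedgeB'' : ∀ x y, x ∈ SM ∪ SL' → y ∈ SM ∪ SL' → G''.Adj x y →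
      (x ∈ SM ∧ y ∈ SM) ∨ (x ∈ SL' ∧ y ∈ SL') := by
    intro x y hx hy h
    rcases hedgeG'' x y h with ⟨h1, h2⟩ | ⟨h1, h2⟩ | ⟨h1, h2⟩
    · exact Or.inr ⟨h1, h2⟩
    · exact Or.inl ⟨h1, h2⟩
    · exact absurd ((hmemML'v x h1 hx).trans (hmemML'v y h2 hy).symm) h.ne
  -- connectivity transfers
  have hconnL' : ∀ S : Finset V, (↑S : Set V) ⊆ SL →
      ((G'.induce (↑S : Set V)).Connected ↔ (G.induce (↑S : Set V)).Connected) := by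
    intro S h
    rw [CISAux.induce_congr (↑S : Set V) h hA1]
  have hconnM' : ∀ S : Finset V, (↑S : Set V) ⊆ SM →
      ((G'.induce (↑S : Set V)).Connected ↔ (G.induce (↑S : Set V)).Connected) := by
    intro S h
    rw [CISAux.induce_congr (↑S : Set V) h hA2]
  have hconnR0' : ∀ S : Finset V, (↑S : Set V) ⊆ SR \ {v} →
      ((G'.induce (↑S : Set V)).Connected ↔ (G.induce (↑S : Set V)).Connected) := by
    intro S h
    rw [CISAux.induce_congr (↑S : Set V) h
      (fun x hx y hy => hA3 x hx.1 hx.2 y hy.1 hy.2)]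
  have hconnM'' : ∀ S : Finset V, (↑S : Set V) ⊆ SM →
      ((G''.induce (↑S : Set V)).Connected ↔ (G.induce (↑S : Set V)).Connected) := by
    intro S h
    rw [CISAux.induce_congr (↑S : Set V) h hB1]
  have hconnR'' : ∀ S : Finset V, (↑S : Set V) ⊆ SR →
      ((G''.induce (↑S : Set V)).Connected ↔ (G.induce (↑S : Set V)).Connected) := by
    intro S h
    rw [CISAux.induce_congr (↑S : Set V) h hB2]
  have hconnL0'' : ∀ S : Finset V, (↑S : Set V) ⊆ SL \ {u} →
      ((G''.induce (↑S : Set V)).Connected ↔ (G.induce (↑S : Set V)).Connected) := by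
    intro S h
    rw [CISAux.induce_congr (↑S : Set V) h
      (fun x hx y hy => hB3 x hx.1 hx.2 y hy.1 hy.2)]
  -- swap facts
  have hswap' : ∀ x ∈ SR', ∀ y ∈ SR',
      (G'.Adj x y ↔ G.Adj (Equiv.swap u v x) (Equiv.swap u v y)) := by
    intro x hx y hy
    rcases hmemSR' x hx with rfl | ⟨hxR, hxv⟩
    · rcases hmemSR' y hy with rfl | ⟨hyR, hyv⟩
      · constructor <;> intro h <;> exact absurd rfl h.ne
      · rw [Equiv.swap_apply_left,
          Equiv.swap_apply_of_ne_of_ne (hneu y hyR) hyv]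
        exact hA4 y hyR hyv
    · rcases hmemSR' y hy with rfl | ⟨hyR, hyv⟩
      · rw [Equiv.swap_apply_left,
          Equiv.swap_apply_of_ne_of_ne (hneu x hxR) hxv]
        constructor
        · intro h
          exact ((hA4 x hxR hxv).mp h.symm).symm
        · intro h
          exact ((hA4 x hxR hxv).mpr h.symm).symm
      · rw [Equiv.swap_apply_of_ne_of_ne (hneu x hxR) hxv,
          Equiv.swap_apply_of_ne_of_ne (hneu y hyR) hyv]
        exact hA3 x hxR hxv y hyR hyv
  have hswap'' : ∀ x ∈ SL', ∀ y ∈ SL',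
      (G''.Adj x y ↔ G.Adj (Equiv.swap u v x) (Equiv.swap u v y)) := by
    intro x hx y hy
    rcases hmemSL' x hx with rfl | ⟨hxL, hxu⟩
    · rcases hmemSL' y hy with rfl | ⟨hyL, hyu⟩
      · constructor <;> intro h <;> exact absurd rfl h.ne
      · rw [Equiv.swap_apply_right,
          Equiv.swap_apply_of_ne_of_ne hyu (hnev y hyL)]
        exact hB4 y hyL hyu
    · rcases hmemSL' y hy with rfl | ⟨hyL, hyu⟩
      · rw [Equiv.swap_apply_right,
          Equiv.swap_apply_of_ne_of_ne hxu (hnev x hxL)]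
        constructor
        · intro h
          exact ((hB4 x hxL hxu).mp h.symm).symm
        · intro h
          exact ((hB4 x hxL hxu).mpr h.symm).symm
      · rw [Equiv.swap_apply_of_ne_of_ne hxu (hnev x hxL),
          Equiv.swap_apply_of_ne_of_ne hyu (hnev y hyL)]
        exact hB3 x hxL hxu y hyL hyu
  have himgR : Equiv.swap u v '' SR' = SR := by
    have hid : ∀ x ∈ SR \ {v}, Equiv.swap u v x = x := by
      intro x hx
      exact Equiv.swap_apply_of_ne_of_ne (hneu x hx.1) hx.2
    show Equiv.swap u v '' (SR \ {v} ∪ {u}) = SR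
    rw [Set.image_union, Set.image_singleton, Equiv.swap_apply_left,
      (Set.image_congr hid).trans (Set.image_id _)]
    exact Set.diff_union_of_subset (Set.singleton_subset_iff.mpr hvR)
  have himgL : Equiv.swap u v '' SL' = SL := by
    have hid : ∀ x ∈ SL \ {u}, Equiv.swap u v x = x := by
      intro x hx
      exact Equiv.swap_apply_of_ne_of_ne hx.2 (hnev x hx.1)
    show Equiv.swap u v '' (SL \ {u} ∪ {v}) = SL
    rw [Set.image_union, Set.image_singleton, Equiv.swap_apply_right,
      (Set.image_congr hid).trans (Set.image_id _)]
    exact Set.diff_union_of_subset (Set.singleton_subset_iff.mpr huL)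
  -- canonical counts
  set a := cnt (fun A : Finset V =>
    (↑A : Set V) ⊆ SL ∧ u ∈ A ∧ (G.induce (↑A : Set V)).Connected) with ha_def
  set b := cnt (fun B : Finset V =>
    (↑B : Set V) ⊆ SR ∧ v ∈ B ∧ (G.induce (↑B : Set V)).Connected) with hb_def
  set t := cnt (fun B : Finset V =>
    (↑B : Set V) ⊆ SM ∧ u ∈ B ∧ (G.induce (↑B : Set V)).Connected ∧ v ∈ B) with ht_def
  set p := cnt (fun B : Finset V =>
    (↑B : Set V) ⊆ SM ∧ u ∈ B ∧ (G.induce (↑B : Set V)).Connected ∧ v ∉ B) with hp_def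
  set q := cnt (fun B : Finset V =>
    (↑B : Set V) ⊆ SM ∧ u ∉ B ∧ (G.induce (↑B : Set V)).Connected ∧ v ∈ B) with hq_def
  set n0 := cnt (fun B : Finset V =>
    (↑B : Set V) ⊆ SM ∧ u ∉ B ∧ (G.induce (↑B : Set V)).Connected ∧ v ∉ B) with hn0_def
  set a0 := cnt (fun A : Finset V =>
    (↑A : Set V) ⊆ SL ∧ u ∉ A ∧ (G.induce (↑A : Set V)).Connected ∧ v ∉ A) with ha0_def
  set b0 := cnt (fun B : Finset V =>
    (↑B : Set V) ⊆ SR ∧ v ∉ B ∧ (G.induce (↑B : Set V)).Connected ∧ True) with hb0_def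
  -- E-congruence facts
  have hEvM : ∀ S T : Finset V, S.filter (· ∈ SM) = T.filter (· ∈ SM) → ((v ∈ S) ↔ (v ∈ T)) := by
    intro S T h
    constructor
    · intro hv
      have h1 : v ∈ S.filter (· ∈ SM) := Finset.mem_filter.mpr ⟨hv, hvM⟩
      rw [h] at h1
      exact (Finset.mem_filter.mp h1).1
    · intro hv
      have h1 : v ∈ T.filter (· ∈ SM) := Finset.mem_filter.mpr ⟨hv, hvM⟩
      rw [← h] at h1
      exact (Finset.mem_filter.mp h1).1
  have hEvMn : ∀ S T : Finset V, S.filter (· ∈ SM) = T.filter (· ∈ SM) → ((v ∉ S) ↔ (v ∉ T)) :=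
    fun S T h => not_congr (hEvM S T h)
  ---- computation for G
  have hP1 : cnt (fun A : Finset V =>
      (↑A : Set V) ⊆ SL ∪ SM ∧ v ∈ A ∧ (G.induce (↑A : Set V)).Connected) = a * t + q := by
    have e1 : cnt (fun A : Finset V =>
        ((↑A : Set V) ⊆ SL ∪ SM ∧ v ∈ A ∧ (G.induce (↑A : Set V)).Connected) ∧ u ∈ A)
        = a * t :=
      (cnt_congr fun S => by tauto).trans (cnt_glue_mul hLM hedgeB (fun S => v ∈ S) hEvM)
    have hz : cnt (fun A : Finset V =>
        (↑A : Set V) ⊆ SL ∧ u ∉ A ∧ (G.induce (↑A : Set V)).Connected ∧ v ∈ A) = 0 := by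
      apply cnt_zero
      rintro S ⟨hsub, -, -, hvS⟩
      exact hvL (hsub (Finset.mem_coe.mpr hvS))
    have e2 : cnt (fun A : Finset V =>
        ((↑A : Set V) ⊆ SL ∪ SM ∧ v ∈ A ∧ (G.induce (↑A : Set V)).Connected) ∧ ¬ u ∈ A)
        = q := by
      calc cnt (fun A : Finset V =>
            ((↑A : Set V) ⊆ SL ∪ SM ∧ v ∈ A ∧ (G.induce (↑A : Set V)).Connected) ∧ ¬ u ∈ A)
          = cnt (fun A : Finset V =>
              (↑A : Set V) ⊆ SL ∧ u ∉ A ∧ (G.induce (↑A : Set V)).Connected ∧ v ∈ A) +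
            cnt (fun A : Finset V =>
              (↑A : Set V) ⊆ SM ∧ u ∉ A ∧ (G.induce (↑A : Set V)).Connected ∧ v ∈ A) :=
            (cnt_congr fun S => by tauto).trans (cnt_glue_add hLM hedgeB (fun S => v ∈ S))
        _ = q := by rw [hz, zero_add]
    calc cnt (fun A : Finset V =>
          (↑A : Set V) ⊆ SL ∪ SM ∧ v ∈ A ∧ (G.induce (↑A : Set V)).Connected)
        = cnt (fun A : Finset V =>
            ((↑A : Set V) ⊆ SL ∪ SM ∧ v ∈ A ∧ (G.induce (↑A : Set V)).Connected) ∧ u ∈ A) +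
          cnt (fun A : Finset V =>
            ((↑A : Set V) ⊆ SL ∪ SM ∧ v ∈ A ∧ (G.induce (↑A : Set V)).Connected) ∧ ¬ u ∈ A) :=
          cnt_split _ _
      _ = a * t + q := by rw [e1, e2]
  have hP0 : cnt (fun A : Finset V =>
      (↑A : Set V) ⊆ SL ∪ SM ∧ v ∉ A ∧ (G.induce (↑A : Set V)).Connected ∧ True)
      = a * p + (a0 + n0) := by
    have e1 : cnt (fun A : Finset V =>
        ((↑A : Set V) ⊆ SL ∪ SM ∧ v ∉ A ∧ (G.induce (↑A : Set V)).Connected ∧ True) ∧ u ∈ A)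
        = a * p :=
      (cnt_congr fun S => by tauto).trans (cnt_glue_mul hLM hedgeB (fun S => v ∉ S) hEvMn)
    have e2 : cnt (fun A : Finset V =>
        ((↑A : Set V) ⊆ SL ∪ SM ∧ v ∉ A ∧ (G.induce (↑A : Set V)).Connected ∧ True) ∧ ¬ u ∈ A)
        = a0 + n0 :=
      (cnt_congr fun S => by tauto).trans (cnt_glue_add hLM hedgeB (fun S => v ∉ S))
    calc cnt (fun A : Finset V =>
          (↑A : Set V) ⊆ SL ∪ SM ∧ v ∉ A ∧ (G.induce (↑A : Set V)).Connected ∧ True)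
        = cnt (fun A : Finset V =>
            ((↑A : Set V) ⊆ SL ∪ SM ∧ v ∉ A ∧ (G.induce (↑A : Set V)).Connected ∧ True) ∧ u ∈ A) +
          cnt (fun A : Finset V =>
            ((↑A : Set V) ⊆ SL ∪ SM ∧ v ∉ A ∧ (G.induce (↑A : Set V)).Connected ∧ True) ∧ ¬ u ∈ A) :=
          cnt_split _ _
      _ = a * p + (a0 + n0) := by rw [e1, e2]
  have hbT : cnt (fun B : Finset V =>
      (↑B : Set V) ⊆ SR ∧ v ∈ B ∧ (G.induce (↑B : Set V)).Connected ∧ True) = b :=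
    (cnt_congr fun S => by tauto).trans hb_def.symm
  have hNG : numCIS G = (a * t + q) * b + (a * p + (a0 + n0) + b0) := by
    have h1 : cnt (fun S : Finset V => (G.induce (↑S : Set V)).Connected ∧ v ∈ S)
        = (a * t + q) * b := by
      calc cnt (fun S : Finset V => (G.induce (↑S : Set V)).Connected ∧ v ∈ S)
          = cnt (fun A : Finset V =>
              (↑A : Set V) ⊆ SL ∪ SM ∧ v ∈ A ∧ (G.induce (↑A : Set V)).Connected) *
            cnt (fun B : Finset V =>
              (↑B : Set V) ⊆ SR ∧ v ∈ B ∧ (G.induce (↑B : Set V)).Connected ∧ True) :=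
            (cnt_congr fun S =>
              ⟨fun h => ⟨fun x _ => huniv x, h.2, h.1, trivial⟩,
               fun h => ⟨h.2.2.1, h.2.1⟩⟩).trans
              (cnt_glue_mul hXY1 hedgeA (fun _ => True) (fun S T h => Iff.rfl))
        _ = (a * t + q) * b := by rw [hP1, hbT]
    have h2 : cnt (fun S : Finset V => (G.induce (↑S : Set V)).Connected ∧ ¬ v ∈ S)
        = a * p + (a0 + n0) + b0 := by
      calc cnt (fun S : Finset V => (G.induce (↑S : Set V)).Connected ∧ ¬ v ∈ S)
          = cnt (fun A : Finset V =>
              (↑A : Set V) ⊆ SL ∪ SM ∧ v ∉ A ∧ (G.induce (↑A : Set V)).Connected ∧ True) +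
            cnt (fun B : Finset V =>
              (↑B : Set V) ⊆ SR ∧ v ∉ B ∧ (G.induce (↑B : Set V)).Connected ∧ True) :=
            (cnt_congr fun S =>
              ⟨fun h => ⟨fun x _ => huniv x, h.2, h.1, trivial⟩,
               fun h => ⟨h.2.2.1, h.2.1⟩⟩).trans
              (cnt_glue_add hXY1 hedgeA (fun _ => True))
        _ = a * p + (a0 + n0) + b0 := by rw [hP0, ← hb0_def]
    calc numCIS G = cnt (fun S : Finset V => (G.induce (↑S : Set V)).Connected) := numCIS_cnt G
      _ = cnt (fun S : Finset V => (G.induce (↑S : Set V)).Connected ∧ v ∈ S) +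
          cnt (fun S : Finset V => (G.induce (↑S : Set V)).Connected ∧ ¬ v ∈ S) := cnt_split _ _
      _ = (a * t + q) * b + (a * p + (a0 + n0) + b0) := by rw [h1, h2]
  ---- computation for G'
  have haL' : cnt (fun A : Finset V =>
      (↑A : Set V) ⊆ SL ∧ u ∈ A ∧ (G'.induce (↑A : Set V)).Connected) = a :=
    (cnt_congr fun S =>
      ⟨fun h => ⟨h.1, h.2.1, (hconnL' S h.1).mp h.2.2⟩,
       fun h => ⟨h.1, h.2.1, (hconnL' S h.1).mpr h.2.2⟩⟩).trans ha_def.symm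
  have hMu' : cnt (fun B : Finset V =>
      (↑B : Set V) ⊆ SM ∧ u ∈ B ∧ (G'.induce (↑B : Set V)).Connected) = t + p := by
    have e0 : cnt (fun B : Finset V =>
        (↑B : Set V) ⊆ SM ∧ u ∈ B ∧ (G'.induce (↑B : Set V)).Connected)
        = cnt (fun B : Finset V =>
        (↑B : Set V) ⊆ SM ∧ u ∈ B ∧ (G.induce (↑B : Set V)).Connected) :=
      cnt_congr fun S =>
        ⟨fun h => ⟨h.1, h.2.1, (hconnM' S h.1).mp h.2.2⟩,
         fun h => ⟨h.1, h.2.1, (hconnM' S h.1).mpr h.2.2⟩⟩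
    rw [e0, cnt_split (fun B : Finset V =>
      (↑B : Set V) ⊆ SM ∧ u ∈ B ∧ (G.induce (↑B : Set V)).Connected) (fun B => v ∈ B)]
    congr 1
    · exact (cnt_congr fun S => by tauto).trans ht_def.symm
    · exact (cnt_congr fun S => by tauto).trans hp_def.symm
  have hRu' : cnt (fun C : Finset V =>
      (↑C : Set V) ⊆ SR' ∧ u ∈ C ∧ (G'.induce (↑C : Set V)).Connected) = b :=
    (cnt_swap (Equiv.swap u v) himgR (Equiv.swap_apply_left u v) hswap').trans hb_def.symm
  have hM0' : cnt (fun B : Finset V =>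
      (↑B : Set V) ⊆ SM ∧ u ∉ B ∧ (G'.induce (↑B : Set V)).Connected ∧ True) = q + n0 := by
    have e0 : cnt (fun B : Finset V =>
        (↑B : Set V) ⊆ SM ∧ u ∉ B ∧ (G'.induce (↑B : Set V)).Connected ∧ True)
        = cnt (fun B : Finset V =>
        (↑B : Set V) ⊆ SM ∧ u ∉ B ∧ (G.induce (↑B : Set V)).Connected) :=
      cnt_congr fun S =>
        ⟨fun h => ⟨h.1, h.2.1, (hconnM' S h.1).mp h.2.2.1⟩,
         fun h => ⟨h.1, h.2.1, (hconnM' S h.1).mpr h.2.2, trivial⟩⟩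
    rw [e0, cnt_split (fun B : Finset V =>
      (↑B : Set V) ⊆ SM ∧ u ∉ B ∧ (G.induce (↑B : Set V)).Connected) (fun B => v ∈ B)]
    congr 1
    · exact (cnt_congr fun S => by tauto).trans hq_def.symm
    · exact (cnt_congr fun S => by tauto).trans hn0_def.symm
  have hL0' : cnt (fun A : Finset V =>
      (↑A : Set V) ⊆ SL ∧ u ∉ A ∧ (G'.induce (↑A : Set V)).Connected ∧ True) = a0 :=
    (cnt_congr fun S =>
      ⟨fun h => ⟨h.1, h.2.1, (hconnL' S h.1).mp h.2.2.1,
          fun hv => hvL (h.1 (Finset.mem_coe.mpr hv))⟩,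
       fun h => ⟨h.1, h.2.1, (hconnL' S h.1).mpr h.2.2.1, trivial⟩⟩).trans ha0_def.symm
  have hR0' : cnt (fun C : Finset V =>
      (↑C : Set V) ⊆ SR' ∧ u ∉ C ∧ (G'.induce (↑C : Set V)).Connected ∧ True) = b0 := by
    refine (cnt_congr fun S => ?_).trans hb0_def.symm
    constructor
    · rintro ⟨hsub, hu, hc, -⟩
      have hsub' : (↑S : Set V) ⊆ SR \ {v} := by
        intro x hx
        rcases hmemSR' x (hsub hx) with rfl | ⟨hxR, hxv⟩
        · exact absurd (Finset.mem_coe.mp hx) hu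
        · exact ⟨hxR, hxv⟩
      exact ⟨fun x hx => (hsub' hx).1,
        fun hv' => (hsub' (Finset.mem_coe.mpr hv')).2 rfl,
        (hconnR0' S hsub').mp hc, trivial⟩
    · rintro ⟨hsub, hv', hc, -⟩
      have hsub' : (↑S : Set V) ⊆ SR \ {v} := by
        intro x hx
        refine ⟨hsub hx, fun e => hv' (Finset.mem_coe.mp ?_)⟩
        have : (x : V) = v := e
        rw [← this]
        exact hx
      exact ⟨fun x hx => Or.inl (hsub' hx),
        fun hu' => huR (hsub (Finset.mem_coe.mpr hu')),
        (hconnR0' S hsub').mpr hc, trivial⟩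
  have hNG' : numCIS G' = a * ((t + p) * b) + (a0 + ((q + n0) + b0)) := by
    have hInner : cnt (fun B : Finset V =>
        (↑B : Set V) ⊆ SM ∪ SR' ∧ u ∈ B ∧ (G'.induce (↑B : Set V)).Connected ∧ True)
        = (t + p) * b := by
      calc cnt (fun B : Finset V =>
            (↑B : Set V) ⊆ SM ∪ SR' ∧ u ∈ B ∧ (G'.induce (↑B : Set V)).Connected ∧ True)
          = cnt (fun B : Finset V =>
              (↑B : Set V) ⊆ SM ∧ u ∈ B ∧ (G'.induce (↑B : Set V)).Connected) *
            cnt (fun C : Finset V =>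
              (↑C : Set V) ⊆ SR' ∧ u ∈ C ∧ (G'.induce (↑C : Set V)).Connected ∧ True) :=
            cnt_glue_mul hXY2' hedgeB' (fun _ => True) (fun S T h => Iff.rfl)
        _ = (t + p) * b := by
            rw [hMu']
            congr 1
            exact (cnt_congr fun S => by tauto).trans hRu'
    have h1 : cnt (fun S : Finset V => (G'.induce (↑S : Set V)).Connected ∧ u ∈ S)
        = a * ((t + p) * b) := by
      calc cnt (fun S : Finset V => (G'.induce (↑S : Set V)).Connected ∧ u ∈ S)
          = cnt (fun A : Finset V =>
              (↑A : Set V) ⊆ SL ∧ u ∈ A ∧ (G'.induce (↑A : Set V)).Connected) *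
            cnt (fun B : Finset V =>
              (↑B : Set V) ⊆ SM ∪ SR' ∧ u ∈ B ∧ (G'.induce (↑B : Set V)).Connected ∧ True) :=
            (cnt_congr fun S =>
              ⟨fun h => ⟨fun x _ => huniv' x, h.2, h.1, trivial⟩,
               fun h => ⟨h.2.2.1, h.2.1⟩⟩).trans
              (cnt_glue_mul hXY1' hedgeA' (fun _ => True) (fun S T h => Iff.rfl))
        _ = a * ((t + p) * b) := by rw [haL', hInner]
    have h2 : cnt (fun S : Finset V => (G'.induce (↑S : Set V)).Connected ∧ ¬ u ∈ S)
        = a0 + ((q + n0) + b0) := by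
      calc cnt (fun S : Finset V => (G'.induce (↑S : Set V)).Connected ∧ ¬ u ∈ S)
          = cnt (fun A : Finset V =>
              (↑A : Set V) ⊆ SL ∧ u ∉ A ∧ (G'.induce (↑A : Set V)).Connected ∧ True) +
            cnt (fun B : Finset V =>
              (↑B : Set V) ⊆ SM ∪ SR' ∧ u ∉ B ∧ (G'.induce (↑B : Set V)).Connected ∧ True) :=
            (cnt_congr fun S =>
              ⟨fun h => ⟨fun x _ => huniv' x, h.2, h.1, trivial⟩,
               fun h => ⟨h.2.2.1, h.2.1⟩⟩).trans
              (cnt_glue_add hXY1' hedgeA' (fun _ => True))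
        _ = a0 + ((q + n0) + b0) := by
            rw [hL0']
            congr 1
            calc cnt (fun B : Finset V =>
                  (↑B : Set V) ⊆ SM ∪ SR' ∧ u ∉ B ∧ (G'.induce (↑B : Set V)).Connected ∧ True)
                = cnt (fun B : Finset V =>
                    (↑B : Set V) ⊆ SM ∧ u ∉ B ∧ (G'.induce (↑B : Set V)).Connected ∧ True) +
                  cnt (fun C : Finset V =>
                    (↑C : Set V) ⊆ SR' ∧ u ∉ C ∧ (G'.induce (↑C : Set V)).Connected ∧ True) :=
                  cnt_glue_add hXY2' hedgeB' (fun _ => True)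
              _ = (q + n0) + b0 := by rw [hM0', hR0']
    calc numCIS G' = cnt (fun S : Finset V => (G'.induce (↑S : Set V)).Connected) := numCIS_cnt G'
      _ = cnt (fun S : Finset V => (G'.induce (↑S : Set V)).Connected ∧ u ∈ S) +
          cnt (fun S : Finset V => (G'.induce (↑S : Set V)).Connected ∧ ¬ u ∈ S) := cnt_split _ _
      _ = a * ((t + p) * b) + (a0 + ((q + n0) + b0)) := by rw [h1, h2]
  ---- computation for G''
  have hbR'' : cnt (fun A : Finset V =>
      (↑A : Set V) ⊆ SR ∧ v ∈ A ∧ (G''.induce (↑A : Set V)).Connected) = b :=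
    (cnt_congr fun S =>
      ⟨fun h => ⟨h.1, h.2.1, (hconnR'' S h.1).mp h.2.2⟩,
       fun h => ⟨h.1, h.2.1, (hconnR'' S h.1).mpr h.2.2⟩⟩).trans hb_def.symm
  have hMv'' : cnt (fun B : Finset V =>
      (↑B : Set V) ⊆ SM ∧ v ∈ B ∧ (G''.induce (↑B : Set V)).Connected) = t + q := by
    have e0 : cnt (fun B : Finset V =>
        (↑B : Set V) ⊆ SM ∧ v ∈ B ∧ (G''.induce (↑B : Set V)).Connected)
        = cnt (fun B : Finset V =>
        (↑B : Set V) ⊆ SM ∧ v ∈ B ∧ (G.induce (↑B : Set V)).Connected) :=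
      cnt_congr fun S =>
        ⟨fun h => ⟨h.1, h.2.1, (hconnM'' S h.1).mp h.2.2⟩,
         fun h => ⟨h.1, h.2.1, (hconnM'' S h.1).mpr h.2.2⟩⟩
    rw [e0, cnt_split (fun B : Finset V =>
      (↑B : Set V) ⊆ SM ∧ v ∈ B ∧ (G.induce (↑B : Set V)).Connected) (fun B => u ∈ B)]
    congr 1
    · exact (cnt_congr fun S => by tauto).trans ht_def.symm
    · exact (cnt_congr fun S => by tauto).trans hq_def.symm
  have hLv'' : cnt (fun C : Finset V =>
      (↑C : Set V) ⊆ SL' ∧ v ∈ C ∧ (G''.induce (↑C : Set V)).Connected) = a :=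
    (cnt_swap (Equiv.swap u v) himgL (Equiv.swap_apply_right u v) hswap'').trans ha_def.symm
  have hM0'' : cnt (fun B : Finset V =>
      (↑B : Set V) ⊆ SM ∧ v ∉ B ∧ (G''.induce (↑B : Set V)).Connected ∧ True) = p + n0 := by
    have e0 : cnt (fun B : Finset V =>
        (↑B : Set V) ⊆ SM ∧ v ∉ B ∧ (G''.induce (↑B : Set V)).Connected ∧ True)
        = cnt (fun B : Finset V =>
        (↑B : Set V) ⊆ SM ∧ v ∉ B ∧ (G.induce (↑B : Set V)).Connected) :=
      cnt_congr fun S =>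
        ⟨fun h => ⟨h.1, h.2.1, (hconnM'' S h.1).mp h.2.2.1⟩,
         fun h => ⟨h.1, h.2.1, (hconnM'' S h.1).mpr h.2.2, trivial⟩⟩
    rw [e0, cnt_split (fun B : Finset V =>
      (↑B : Set V) ⊆ SM ∧ v ∉ B ∧ (G.induce (↑B : Set V)).Connected) (fun B => u ∈ B)]
    congr 1
    · exact (cnt_congr fun S => by tauto).trans hp_def.symm
    · exact (cnt_congr fun S => by tauto).trans hn0_def.symm
  have hR0'' : cnt (fun B : Finset V =>
      (↑B : Set V) ⊆ SR ∧ v ∉ B ∧ (G''.induce (↑B : Set V)).Connected ∧ True) = b0 :=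
    (cnt_congr fun S =>
      ⟨fun h => ⟨h.1, h.2.1, (hconnR'' S h.1).mp h.2.2.1, trivial⟩,
       fun h => ⟨h.1, h.2.1, (hconnR'' S h.1).mpr h.2.2.1, trivial⟩⟩).trans hb0_def.symm
  have hL0'' : cnt (fun C : Finset V =>
      (↑C : Set V) ⊆ SL' ∧ v ∉ C ∧ (G''.induce (↑C : Set V)).Connected ∧ True) = a0 := by
    refine (cnt_congr fun S => ?_).trans ha0_def.symm
    constructor
    · rintro ⟨hsub, hv', hc, -⟩
      have hsub' : (↑S : Set V) ⊆ SL \ {u} := by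
        intro x hx
        rcases hmemSL' x (hsub hx) with rfl | ⟨hxL, hxu⟩
        · exact absurd (Finset.mem_coe.mp hx) hv'
        · exact ⟨hxL, hxu⟩
      exact ⟨fun x hx => (hsub' hx).1,
        fun hu' => (hsub' (Finset.mem_coe.mpr hu')).2 rfl,
        (hconnL0'' S hsub').mp hc, hv'⟩
    · rintro ⟨hsub, hu', hc, hv'⟩
      have hsub' : (↑S : Set V) ⊆ SL \ {u} := by
        intro x hx
        refine ⟨hsub hx, fun e => hu' (Finset.mem_coe.mp ?_)⟩
        have : (x : V) = u := e
        rw [← this]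
        exact hx
      exact ⟨fun x hx => Or.inl (hsub' hx), hv',
        (hconnL0'' S hsub').mpr hc, trivial⟩
  have hNG'' : numCIS G'' = b * ((t + q) * a) + (b0 + ((p + n0) + a0)) := by
    have hInner : cnt (fun B : Finset V =>
        (↑B : Set V) ⊆ SM ∪ SL' ∧ v ∈ B ∧ (G''.induce (↑B : Set V)).Connected ∧ True)
        = (t + q) * a := by
      calc cnt (fun B : Finset V =>
            (↑B : Set V) ⊆ SM ∪ SL' ∧ v ∈ B ∧ (G''.induce (↑B : Set V)).Connected ∧ True)
          = cnt (fun B : Finset V =>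
              (↑B : Set V) ⊆ SM ∧ v ∈ B ∧ (G''.induce (↑B : Set V)).Connected) *
            cnt (fun C : Finset V =>
              (↑C : Set V) ⊆ SL' ∧ v ∈ C ∧ (G''.induce (↑C : Set V)).Connected ∧ True) :=
            cnt_glue_mul hXY2'' hedgeB'' (fun _ => True) (fun S T h => Iff.rfl)
        _ = (t + q) * a := by
            rw [hMv'']
            congr 1
            exact (cnt_congr fun S => by tauto).trans hLv''
    have h1 : cnt (fun S : Finset V => (G''.induce (↑S : Set V)).Connected ∧ v ∈ S)
        = b * ((t + q) * a) := by
      calc cnt (fun S : Finset V => (G''.induce (↑S : Set V)).Connected ∧ v ∈ S)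
          = cnt (fun A : Finset V =>
              (↑A : Set V) ⊆ SR ∧ v ∈ A ∧ (G''.induce (↑A : Set V)).Connected) *
            cnt (fun B : Finset V =>
              (↑B : Set V) ⊆ SM ∪ SL' ∧ v ∈ B ∧ (G''.induce (↑B : Set V)).Connected ∧ True) :=
            (cnt_congr fun S =>
              ⟨fun h => ⟨fun x _ => huniv'' x, h.2, h.1, trivial⟩,
               fun h => ⟨h.2.2.1, h.2.1⟩⟩).trans
              (cnt_glue_mul hXY1'' hedgeA'' (fun _ => True) (fun S T h => Iff.rfl))
        _ = b * ((t + q) * a) := by rw [hbR'', hInner]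
    have h2 : cnt (fun S : Finset V => (G''.induce (↑S : Set V)).Connected ∧ ¬ v ∈ S)
        = b0 + ((p + n0) + a0) := by
      calc cnt (fun S : Finset V => (G''.induce (↑S : Set V)).Connected ∧ ¬ v ∈ S)
          = cnt (fun A : Finset V =>
              (↑A : Set V) ⊆ SR ∧ v ∉ A ∧ (G''.induce (↑A : Set V)).Connected ∧ True) +
            cnt (fun B : Finset V =>
              (↑B : Set V) ⊆ SM ∪ SL' ∧ v ∉ B ∧ (G''.induce (↑B : Set V)).Connected ∧ True) :=
            (cnt_congr fun S =>
              ⟨fun h => ⟨fun x _ => huniv'' x, h.2, h.1, trivial⟩,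
               fun h => ⟨h.2.2.1, h.2.1⟩⟩).trans
              (cnt_glue_add hXY1'' hedgeA'' (fun _ => True))
        _ = b0 + ((p + n0) + a0) := by
            rw [hR0'']
            congr 1
            calc cnt (fun B : Finset V =>
                  (↑B : Set V) ⊆ SM ∪ SL' ∧ v ∉ B ∧ (G''.induce (↑B : Set V)).Connected ∧ True)
                = cnt (fun B : Finset V =>
                    (↑B : Set V) ⊆ SM ∧ v ∉ B ∧ (G''.induce (↑B : Set V)).Connected ∧ True) +
                  cnt (fun C : Finset V =>
                    (↑C : Set V) ⊆ SL' ∧ v ∉ C ∧ (G''.induce (↑C : Set V)).Connected ∧ True) :=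
                  cnt_glue_add hXY2'' hedgeB'' (fun _ => True)
              _ = (p + n0) + a0 := by rw [hM0'', hL0'']
    calc numCIS G'' = cnt (fun S : Finset V => (G''.induce (↑S : Set V)).Connected) :=
        numCIS_cnt G''
      _ = cnt (fun S : Finset V => (G''.induce (↑S : Set V)).Connected ∧ v ∈ S) +
          cnt (fun S : Finset V => (G''.induce (↑S : Set V)).Connected ∧ ¬ v ∈ S) := cnt_split _ _
      _ = b * ((t + q) * a) + (b0 + ((p + n0) + a0)) := by rw [h1, h2]
  ---- statement quantities
  have hbS : numCISat (G.induce SR) ⟨v, hvR⟩ = b :=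
    (numCISat_cnt G SR v hvR).trans hb_def.symm
  have haS : numCISat (G.induce SL) ⟨u, huL⟩ = a :=
    (numCISat_cnt G SL u huL).trans ha_def.symm
  have hpS : numCISat (G.induce (SM \ {v})) ⟨u, ⟨huM, huv⟩⟩ = p := by
    refine (numCISat_cnt G (SM \ {v}) u ⟨huM, huv⟩).trans
      ((cnt_congr fun S => ?_).trans hp_def.symm)
    constructor
    · rintro ⟨hsub, hu, hc⟩
      exact ⟨fun x hx => (hsub hx).1, hu, hc,
        fun hv' => (hsub (Finset.mem_coe.mpr hv')).2 rfl⟩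
    · rintro ⟨hsub, hu, hc, hv'⟩
      refine ⟨?_, hu, hc⟩
      intro x hx
      refine ⟨hsub hx, fun e => hv' (Finset.mem_coe.mp ?_)⟩
      have : (x : V) = v := e
      rw [← this]
      exact hx
  have hqS : numCISat (G.induce (SM \ {u})) ⟨v, ⟨hvM, fun h => huv h.symm⟩⟩ = q := by
    refine (numCISat_cnt G (SM \ {u}) v ⟨hvM, fun h => huv h.symm⟩).trans
      ((cnt_congr fun S => ?_).trans hq_def.symm)
    constructor
    · rintro ⟨hsub, hv', hc⟩
      exact ⟨fun x hx => (hsub hx).1,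
        fun hu' => (hsub (Finset.mem_coe.mpr hu')).2 rfl, hc, hv'⟩
    · rintro ⟨hsub, hu', hc, hv'⟩
      refine ⟨?_, hv', hc⟩
      intro x hx
      refine ⟨hsub hx, fun e => hu' (Finset.mem_coe.mp ?_)⟩
      have : (x : V) = u := e
      rw [← this]
      exact hx
  ---- lower bounds
  have hsingconn : ∀ x : V, (G.induce (↑({x} : Finset V) : Set V)).Connected := by
    intro x
    rw [Finset.coe_singleton, SimpleGraph.induce_singleton_eq_top]
    haveI : Nonempty ({x} : Set V) := ⟨⟨x, rfl⟩⟩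
    exact SimpleGraph.connected_top
  have ha2 : 2 ≤ a := by
    rw [ha_def]
    have hcardSL : 2 ≤ (Set.toFinset SL).card := by
      rw [Set.toFinset_card, ← Nat.card_eq_fintype_card]
      exact hLcard
    refine two_le_cnt ({u} : Finset V) (Set.toFinset SL)
      ⟨by rw [Finset.coe_singleton]; exact Set.singleton_subset_iff.mpr huL,
        Finset.mem_singleton_self u, hsingconn u⟩
      ⟨by rw [Set.coe_toFinset], Set.mem_toFinset.mpr huL,
        by rw [Set.coe_toFinset]; exact hL⟩ ?_
    intro e
    rw [← e] at hcardSL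
    simp at hcardSL
  have hb2 : 2 ≤ b := by
    rw [hb_def]
    have hcardSR : 2 ≤ (Set.toFinset SR).card := by
      rw [Set.toFinset_card, ← Nat.card_eq_fintype_card]
      exact hRcard
    refine two_le_cnt ({v} : Finset V) (Set.toFinset SR)
      ⟨by rw [Finset.coe_singleton]; exact Set.singleton_subset_iff.mpr hvR,
        Finset.mem_singleton_self v, hsingconn v⟩
      ⟨by rw [Set.coe_toFinset], Set.mem_toFinset.mpr hvR,
        by rw [Set.coe_toFinset]; exact hR⟩ ?_
    intro e
    rw [← e] at hcardSR
    simp at hcardSR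
  have hp1 : 1 ≤ p := by
    rw [hp_def]
    exact one_le_cnt ({u} : Finset V)
      ⟨by rw [Finset.coe_singleton]; exact Set.singleton_subset_iff.mpr huM,
        Finset.mem_singleton_self u, hsingconn u,
        fun h => huv (Finset.mem_singleton.mp h).symm⟩
  have hq1 : 1 ≤ q := by
    rw [hq_def]
    exact one_le_cnt ({v} : Finset V)
      ⟨by rw [Finset.coe_singleton]; exact Set.singleton_subset_iff.mpr hvM,
        fun h => huv (Finset.mem_singleton.mp h),
        hsingconn v, Finset.mem_singleton_self v⟩
  ---- conclusion
  have E1 : (numCIS G' : ℤ) - numCIS G = ((b : ℤ) - 1) * ((a : ℤ) * p - q) := by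
    rw [hNG', hNG]
    push_cast
    ring
  have E2 : (numCIS G'' : ℤ) - numCIS G = ((a : ℤ) - 1) * ((b : ℤ) * q - p) := by
    rw [hNG'', hNG]
    push_cast
    ring
  refine ⟨by rw [hbS, haS, hpS, hqS]; exact E1, by rw [hbS, haS, hpS, hqS]; exact E2, ?_⟩
  by_contra hcon
  push_neg at hcon
  obtain ⟨hc1, hc2⟩ := hcon
  have hZa : (2 : ℤ) ≤ (a : ℤ) := by exact_mod_cast ha2
  have hZb : (2 : ℤ) ≤ (b : ℤ) := by exact_mod_cast hb2
  have hZp : (1 : ℤ) ≤ (p : ℤ) := by exact_mod_cast hp1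
  have hZq : (1 : ℤ) ≤ (q : ℤ) := by exact_mod_cast hq1
  have i1 : (numCIS G' : ℤ) - numCIS G ≤ 0 := by
    have h := hc1
    have h' : (numCIS G' : ℤ) ≤ numCIS G := by exact_mod_cast h
    linarith only [h']
  have i2 : (numCIS G'' : ℤ) - numCIS G ≤ 0 := by
    have h := hc2
    have h' : (numCIS G'' : ℤ) ≤ numCIS G := by exact_mod_cast h
    linarith only [h']
  rw [E1] at i1
  rw [E2] at i2
  have k1 : (a : ℤ) * p - q ≤ 0 := by
    by_contra hk
    push_neg at hk
    have hpos : 0 < ((b : ℤ) - 1) * ((a : ℤ) * p - q) :=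
      mul_pos (by linarith only [hZb]) hk
    linarith only [i1, hpos]
  have k2 : (b : ℤ) * q - p ≤ 0 := by
    by_contra hk
    push_neg at hk
    have hpos : 0 < ((a : ℤ) - 1) * ((b : ℤ) * q - p) :=
      mul_pos (by linarith only [hZa]) hk
    linarith only [i2, hpos]
  have m1 : (a : ℤ) * ((b : ℤ) * q) ≤ (a : ℤ) * p :=
    mul_le_mul_of_nonneg_left (by linarith only [k2]) (by linarith only [hZa])
  have hbqnn : (0 : ℤ) ≤ (b : ℤ) * q := mul_nonneg (by linarith only [hZb]) (by linarith only [hZq])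
  have hbq : (2 : ℤ) * q ≤ (b : ℤ) * q :=
    mul_le_mul_of_nonneg_right hZb (by linarith only [hZq])
  have habq : (2 : ℤ) * ((b : ℤ) * q) ≤ (a : ℤ) * ((b : ℤ) * q) :=
    mul_le_mul_of_nonneg_right hZa hbqnn
  linarith only [m1, k1, habq, hbq, hZq]
end

section
/- Let H1 be the graph obtained from the 4-cycle v0v1v2v3 by attaching pendant paths of orders n0, n0, n0−1, n0−1 at v0, v1, v2, v3 respectively, and H2 the graph obtained from the same 4-cycle by attaching pendant paths of orders n0, n0−1, n0, n0−1 at v0, v1, v2, v3 respectively, where n0 ≥ 2. Then N(H1) − N(H2) = 1; in particular placing the two longer pendant paths at adjacent cycle vertices yields strictly more connected induced subgraphs than placing them at opposite vertices. -/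
open SimpleGraph


/-- The cycle `C_g` together with `k` pendant paths: the `i`-th pendant path has
`len i` new vertices and is attached at the cycle vertex `att i`. -/
def cyclePendants (g k : ℕ) (att : Fin k → Fin g) (len : Fin k → ℕ) :
    SimpleGraph (Fin g ⊕ Σ i : Fin k, Fin (len i)) :=
  SimpleGraph.fromRel (fun a b =>
    (∃ x y : Fin g, a = Sum.inl x ∧ b = Sum.inl y ∧ ((x : ℕ) + 1) % g = (y : ℕ)) ∨
    (∃ (i : Fin k) (p q : Fin (len i)), a = Sum.inr ⟨i, p⟩ ∧ b = Sum.inr ⟨i, q⟩ ∧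
      (p : ℕ) + 1 = (q : ℕ)) ∨
    (∃ (i : Fin k) (h : 0 < len i), a = Sum.inl (att i) ∧ b = Sum.inr ⟨i, ⟨0, h⟩⟩))

namespace CIS
abbrev Vt (l : Fin 4 → ℕ) := Fin 4 ⊕ Σ i : Fin 4, Fin (l i)
def Gp (l : Fin 4 → ℕ) : SimpleGraph (Vt l) := cyclePendants 4 4 ![0,1,2,3] l

lemma att_eq : ∀ j : Fin 4, (![0,1,2,3] : Fin 4 → Fin 4) j = j := by decide

lemma adj_inl_inl {l} {x y : Fin 4} :
    (Gp l).Adj (.inl x) (.inl y) ↔ (((x:ℕ)+1)%4 = y ∨ ((y:ℕ)+1)%4 = x) := by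
  simp only [Gp, cyclePendants, fromRel_adj]
  simp
  have hx := x.is_lt; have hy := y.is_lt
  rintro (h|h) rfl <;> omega

lemma adj_inl_inr {l} {x i : Fin 4} {p : Fin (l i)} :
    (Gp l).Adj (.inl x) (.inr ⟨i, p⟩) ↔ (x = i ∧ (p:ℕ) = 0) := by
  simp only [Gp, cyclePendants, fromRel_adj]
  simp
  constructor
  · rintro ⟨hx, hpos, rfl⟩
    exact ⟨hx.trans (att_eq _), rfl⟩
  · rintro ⟨rfl, h0⟩
    exact ⟨(att_eq _).symm, lt_of_le_of_lt (Nat.zero_le _) p.is_lt,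
      Fin.ext h0⟩

lemma adj_inr_inr {l} {i j : Fin 4} {p : Fin (l i)} {q : Fin (l j)} :
    (Gp l).Adj (.inr ⟨i, p⟩) (.inr ⟨j, q⟩) ↔
      (i = j ∧ ((p:ℕ)+1 = (q:ℕ) ∨ (q:ℕ)+1 = (p:ℕ))) := by
  simp only [Gp, cyclePendants, fromRel_adj]
  simp
  constructor
  · rintro ⟨hne, (⟨i', p', ⟨rfl, hp⟩, q', ⟨hj, hq⟩, hpq⟩ | ⟨i', p', ⟨rfl, hp⟩, q', ⟨hj, hq⟩, hpq⟩)⟩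
    · subst hj; exact ⟨rfl, Or.inl (by rw [eq_of_heq hp, eq_of_heq hq]; exact hpq)⟩
    · subst hj; exact ⟨rfl, Or.inr (by rw [eq_of_heq hp, eq_of_heq hq]; exact hpq)⟩
  · rintro ⟨rfl, (h|h)⟩
    · exact ⟨fun _ hpq => by rw [eq_of_heq hpq] at h; omega,
        Or.inl ⟨i, p, ⟨rfl, HEq.rfl⟩, q, ⟨rfl, HEq.rfl⟩, h⟩⟩
    · exact ⟨fun _ hpq => by rw [eq_of_heq hpq] at h; omega,
        Or.inr ⟨i, q, ⟨rfl, HEq.rfl⟩, p, ⟨rfl, HEq.rfl⟩, h⟩⟩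

lemma adj_elim {l} {a b : Vt l} (hab : (Gp l).Adj a b) :
    (∃ x y : Fin 4, a = .inl x ∧ b = .inl y) ∨
    (∃ (i : Fin 4) (p q : Fin (l i)), a = .inr ⟨i,p⟩ ∧ b = .inr ⟨i,q⟩) ∨
    (∃ (i : Fin 4) (p : Fin (l i)), (a = .inl i ∧ b = .inr ⟨i,p⟩ ∧ (p:ℕ) = 0) ∨
      (b = .inl i ∧ a = .inr ⟨i,p⟩ ∧ (p:ℕ) = 0)) := by
  rcases a with x | ⟨i, p⟩ <;> rcases b with y | ⟨j, q⟩
  · exact Or.inl ⟨x, y, rfl, rfl⟩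
  · obtain ⟨rfl, h0⟩ := adj_inl_inr.1 hab
    exact Or.inr (Or.inr ⟨x, q, Or.inl ⟨rfl, rfl, h0⟩⟩)
  · obtain ⟨rfl, h0⟩ := adj_inl_inr.1 hab.symm
    exact Or.inr (Or.inr ⟨y, p, Or.inr ⟨rfl, rfl, h0⟩⟩)
  · obtain ⟨rfl, -⟩ := adj_inr_inr.1 hab
    exact Or.inr (Or.inl ⟨i, p, q, rfl, rfl⟩)
def connT (T : Finset (Fin 4)) : Prop := T.Nonempty ∧ T ≠ {0,2} ∧ T ≠ {1,3}

instance : DecidablePred connT := fun _ => by unfold connT; infer_instance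

abbrev CodeA (l : Fin 4 → ℕ) := Σ i : Fin 4, {pq : Fin (l i) × Fin (l i) // (pq.1:ℕ) ≤ (pq.2:ℕ)}
abbrev CodeB (l : Fin 4 → ℕ) :=
  Σ T : {T : Finset (Fin 4) // connT T}, ∀ i : Fin 4, Fin (if i ∈ T.val then l i + 1 else 1)
abbrev Code (l : Fin 4 → ℕ) := CodeA l ⊕ CodeB l


def decode {l : Fin 4 → ℕ} : Code l → Finset (Vt l)
  | .inl ⟨i, ⟨(p, q), _⟩⟩ =>
      Finset.univ.filter (fun v => ∃ r : Fin (l i),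
        v = Sum.inr ⟨i, r⟩ ∧ (p:ℕ) ≤ (r:ℕ) ∧ (r:ℕ) ≤ (q:ℕ))
  | .inr ⟨T, t⟩ =>
      Finset.univ.filter (fun v =>
        (∃ x : Fin 4, v = Sum.inl x ∧ x ∈ T.val) ∨
        (∃ (i : Fin 4) (r : Fin (l i)), v = Sum.inr ⟨i, r⟩ ∧ (r:ℕ) < (t i : ℕ)))

lemma mem_decodeA {l : Fin 4 → ℕ} {i : Fin 4} {pq} {v : Vt l} :
    v ∈ decode (.inl ⟨i, pq⟩) ↔
      ∃ r : Fin (l i), v = Sum.inr ⟨i, r⟩ ∧ (pq.1.1:ℕ) ≤ (r:ℕ) ∧ (r:ℕ) ≤ (pq.1.2:ℕ) := by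
  obtain ⟨⟨p, q⟩, h⟩ := pq
  simp [decode]

lemma mem_decodeA' {l : Fin 4 → ℕ} {i : Fin 4} {p q : Fin (l i)} {h} {v : Vt l} :
    v ∈ decode (.inl ⟨i, ⟨(p, q), h⟩⟩) ↔
      ∃ r : Fin (l i), v = Sum.inr ⟨i, r⟩ ∧ (p:ℕ) ≤ (r:ℕ) ∧ (r:ℕ) ≤ (q:ℕ) := by
  simp [decode]

lemma mem_decodeB {l : Fin 4 → ℕ} {T} {t} {v : Vt l} :
    v ∈ decode (.inr ⟨T, t⟩) ↔
      (∃ x : Fin 4, v = Sum.inl x ∧ x ∈ T.val) ∨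
      (∃ (i : Fin 4) (r : Fin (l i)), v = Sum.inr ⟨i, r⟩ ∧ (r:ℕ) < (t i : ℕ)) := by
  simp [decode]
variable {l : Fin 4 → ℕ} {s : Finset (Vt l)}

/-- Walks avoiding all cycle vertices stay in one path and fill intervals. -/
lemma walk_noinl (hno : ∀ x : Fin 4, Sum.inl x ∉ s)
    {u v : (↑s : Set (Vt l))} (w : ((Gp l).induce ↑s).Walk u v) :
    ∀ (i : Fin 4) (p : Fin (l i)), u.val = .inr ⟨i, p⟩ →
      ∃ q : Fin (l i), v.val = .inr ⟨i, q⟩ ∧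
        ∀ c : ℕ, min (p:ℕ) (q:ℕ) ≤ c → c ≤ max (p:ℕ) (q:ℕ) →
          ∃ r : Fin (l i), (r:ℕ) = c ∧ .inr ⟨i, r⟩ ∈ s := by
  induction w with
  | @nil z =>
    intro i p hu
    exact ⟨p, hu, fun c h1 h2 => ⟨p, by omega,
      Finset.mem_coe.mp (hu ▸ z.2)⟩⟩
  | @cons a b c hadj w ih =>
    intro i p hu
    have hadj' : (Gp l).Adj a.val b.val := hadj
    rw [hu] at hadj'
    -- b.val cannot be inl
    obtain ⟨j, q⟩ | ⟨⟨j, q⟩, hb⟩ : (∃ x : Fin 4, b.val = .inl x) ∨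
        (∃ jq : Σ j : Fin 4, Fin (l j), b.val = .inr jq) := by
      rcases hb : b.val with x | jq
      · exact Or.inl ⟨x, rfl⟩
      · exact Or.inr ⟨jq, rfl⟩
    · exact absurd (Finset.mem_coe.mp (q ▸ b.2)) (hno j)
    · rw [hb] at hadj'
      obtain ⟨rfl, hstep⟩ := adj_inr_inr.1 hadj'
      obtain ⟨qq, hv, hint⟩ := ih i q hb
      refine ⟨qq, hv, fun c h1 h2 => ?_⟩
      by_cases hc : min (q:ℕ) (qq:ℕ) ≤ c ∧ c ≤ max (q:ℕ) (qq:ℕ)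
      · exact hint c hc.1 hc.2
      · have hc' : c = (p:ℕ) := by omega
        exact ⟨p, hc'.symm, Finset.mem_coe.mp (hu ▸ a.2)⟩

/-- If a walk goes from a path vertex to a cycle vertex, the attachment vertex
and the whole prefix below are in `s`. -/
lemma walk_prefix {u v : (↑s : Set (Vt l))} (w : ((Gp l).induce ↑s).Walk u v) :
    ∀ (i : Fin 4) (p : Fin (l i)), u.val = .inr ⟨i, p⟩ → (∃ x : Fin 4, v.val = .inl x) →
      (.inl i ∈ s ∧ ∀ c : ℕ, c ≤ (p:ℕ) →
        ∃ r : Fin (l i), (r:ℕ) = c ∧ .inr ⟨i, r⟩ ∈ s) := by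
  induction w with
  | nil =>
    rintro i p hu ⟨x, hv⟩
    rw [hu] at hv; exact absurd hv (by simp)
  | @cons a b c hadj w ih =>
    rintro i p hu hv
    have hadj' : (Gp l).Adj a.val b.val := hadj
    rw [hu] at hadj'
    have hmem : Sum.inr ⟨i, p⟩ ∈ s := Finset.mem_coe.mp (hu ▸ a.2)
    rcases hb : b.val with x | ⟨j, q⟩
    · rw [hb] at hadj'
      obtain ⟨rfl, h0⟩ := adj_inl_inr.1 hadj'.symm
      refine ⟨Finset.mem_coe.mp (hb ▸ b.2), fun c hc => ⟨p, by omega, hmem⟩⟩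
    · rw [hb] at hadj'
      obtain ⟨rfl, hstep⟩ := adj_inr_inr.1 hadj'
      obtain ⟨hl, hall⟩ := ih i q hb hv
      refine ⟨hl, fun c hc => ?_⟩
      by_cases hc' : c ≤ (q:ℕ)
      · exact hall c hc'
      · have : c = (p:ℕ) := by omega
        exact ⟨p, this.symm, hmem⟩

def proj {l : Fin 4 → ℕ} : Vt l → Fin 4
  | .inl x => x
  | .inr ⟨i, _⟩ => i

@[simp] lemma proj_inl {l : Fin 4 → ℕ} (x : Fin 4) : proj (l := l) (.inl x) = x := rfl
@[simp] lemma proj_inr {l : Fin 4 → ℕ} (i : Fin 4) (p : Fin (l i)) :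
    proj (.inr ⟨i, p⟩) = i := rfl

/-- The projection of a walk to the cycle. -/
lemma walk_proj (hpre : ∀ (i : Fin 4) (p : Fin (l i)), .inr ⟨i, p⟩ ∈ s → .inl i ∈ s)
    {u v : (↑s : Set (Vt l))} (w : ((Gp l).induce ↑s).Walk u v) :
    Relation.ReflTransGen
      (fun a b : Fin 4 => (((a:ℕ)+1)%4 = b ∨ ((b:ℕ)+1)%4 = a) ∧ .inl a ∈ s ∧ .inl b ∈ s)
      (proj u.val) (proj v.val) := by
  have hproj : ∀ z : (↑s : Set (Vt l)), Sum.inl (proj z.val) ∈ s := by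
    rintro ⟨z, hz⟩
    rcases z with x | ⟨i, p⟩
    · exact Finset.mem_coe.mp hz
    · exact hpre i p (Finset.mem_coe.mp hz)
  induction w with
  | nil => exact Relation.ReflTransGen.refl
  | @cons a b c hadj w ih =>
    have hadj' : (Gp l).Adj a.val b.val := hadj
    rcases ha : a.val with x | ⟨i, p⟩ <;> rcases hb : b.val with y | ⟨j, q⟩ <;>
        rw [ha, hb] at hadj'
    · have hA : proj a.val = x := by rw [ha, proj_inl]
      have hB : proj b.val = y := by rw [hb, proj_inl]
      rw [proj_inl]
      exact Relation.ReflTransGen.head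
        ⟨adj_inl_inl.1 hadj', hA ▸ hproj a, hB ▸ hproj b⟩ (hB ▸ ih)
    · obtain ⟨rfl, -⟩ := adj_inl_inr.1 hadj'
      have hA : proj a.val = x := by rw [ha, proj_inl]
      have hB : proj b.val = x := by rw [hb, proj_inr]
      rw [proj_inl]; exact hB ▸ ih
    · obtain ⟨rfl, -⟩ := adj_inl_inr.1 hadj'.symm
      have hA : proj a.val = y := by rw [ha, proj_inr]
      have hB : proj b.val = y := by rw [hb, proj_inl]
      rw [proj_inr]; exact hB ▸ ih
    · obtain ⟨rfl, -⟩ := adj_inr_inr.1 hadj'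
      have hA : proj a.val = i := by rw [ha, proj_inr]
      have hB : proj b.val = i := by rw [hb, proj_inr]
      rw [proj_inr]; exact hB ▸ ih
def adj4 (a b : Fin 4) : Prop := ((a:ℕ)+1)%4 = (b:ℕ) ∨ ((b:ℕ)+1)%4 = (a:ℕ)
instance : DecidableRel adj4 := fun _ _ => by unfold adj4; infer_instance

def st (T : Finset (Fin 4)) (a b : Fin 4) : Prop := adj4 a b ∧ a ∈ T ∧ b ∈ T
instance (T) : DecidableRel (st T) := fun _ _ => by unfold st; infer_instance

def reach4 (T : Finset (Fin 4)) (x y : Fin 4) : Prop :=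
  x = y ∨ st T x y ∨ (∃ z, st T x z ∧ st T z y) ∨
    (∃ z w, st T x z ∧ st T z w ∧ st T w y)

instance (T) (x y : Fin 4) : Decidable (reach4 T x y) := by unfold reach4; infer_instance

lemma connT_reach : ∀ T : Finset (Fin 4), connT T → ∀ x ∈ T, ∀ y ∈ T, reach4 T x y := by
  decide

lemma bad02 : ∀ a b : Fin 4, (a = 0 ∨ a = 2) → (b = 0 ∨ b = 2) → ¬ adj4 a b := by decide
lemma bad13 : ∀ a b : Fin 4, (a = 1 ∨ a = 3) → (b = 1 ∨ b = 3) → ¬ adj4 a b := by decide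

section Backward
variable {l : Fin 4 → ℕ}

lemma reach_of_adj {s : Finset (Vt l)} {a b : Vt l} (ha : a ∈ s) (hb : b ∈ s)
    (h : (Gp l).Adj a b) :
    ((Gp l).induce (↑s : Set (Vt l))).Reachable ⟨a, Finset.mem_coe.mpr ha⟩
      ⟨b, Finset.mem_coe.mpr hb⟩ :=
  SimpleGraph.Adj.reachable h

lemma reach_path {s : Finset (Vt l)} {i : Fin 4} :
    ∀ (d : ℕ) (a b : Fin (l i)), (b:ℕ) = (a:ℕ) + d →
      (∀ c : Fin (l i), (a:ℕ) ≤ (c:ℕ) → (c:ℕ) ≤ (b:ℕ) → Sum.inr ⟨i,c⟩ ∈ s) →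
      ∀ (ma : Sum.inr ⟨i,a⟩ ∈ s) (mb : Sum.inr ⟨i,b⟩ ∈ s),
      ((Gp l).induce (↑s : Set (Vt l))).Reachable ⟨_, Finset.mem_coe.mpr ma⟩
        ⟨_, Finset.mem_coe.mpr mb⟩ := by
  intro d
  induction d with
  | zero =>
    intro a b hb _ ma mb
    have hab : a = b := Fin.ext (by omega)
    subst hab
    exact Reachable.refl _
  | succ d ih =>
    intro a b hb hall ma mb
    have hdlt : (a:ℕ) + d < l i := by have := b.is_lt; omega
    set m : Fin (l i) := ⟨(a:ℕ) + d, hdlt⟩ with hm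
    have hmem : Sum.inr ⟨i, m⟩ ∈ s := hall m (by simp [hm]) (by simp [hm]; omega)
    have r1 := ih a m rfl (fun c h1 h2 => hall c h1 (by simp [hm] at h2; omega)) ma hmem
    have hadj : (Gp l).Adj (Sum.inr ⟨i, m⟩) (Sum.inr ⟨i, b⟩) :=
      adj_inr_inr.2 ⟨rfl, Or.inl (by simp [hm]; omega)⟩
    exact r1.trans (reach_of_adj hmem mb hadj)

lemma reach_attach {s : Finset (Vt l)} {i : Fin 4} (r : Fin (l i))
    (hall : ∀ c : Fin (l i), (c:ℕ) ≤ (r:ℕ) → Sum.inr ⟨i,c⟩ ∈ s) (hi : Sum.inl i ∈ s) :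
    ((Gp l).induce (↑s : Set (Vt l))).Reachable ⟨Sum.inl i, Finset.mem_coe.mpr hi⟩
      ⟨Sum.inr ⟨i,r⟩, Finset.mem_coe.mpr (hall r le_rfl)⟩ := by
  have hpos : 0 < l i := lt_of_le_of_lt (Nat.zero_le _) r.is_lt
  set z : Fin (l i) := ⟨0, hpos⟩ with hz
  have hz0 : Sum.inr ⟨i, z⟩ ∈ s := hall z (by simp [hz])
  have step1 : ((Gp l).induce (↑s : Set (Vt l))).Reachable ⟨Sum.inl i, Finset.mem_coe.mpr hi⟩
      ⟨Sum.inr ⟨i,z⟩, Finset.mem_coe.mpr hz0⟩ :=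
    reach_of_adj hi hz0 (adj_inl_inr.2 ⟨rfl, rfl⟩)
  exact step1.trans (reach_path (r:ℕ) z r (by simp [hz]) (fun c _ h2 => hall c h2) hz0 (hall r le_rfl))

lemma decode_good (c : Code l) :
    (decode c).Nonempty ∧ ((Gp l).induce (↑(decode c) : Set (Vt l))).Connected := by
  rcases c with ⟨i, ⟨⟨p, q⟩, hpq⟩⟩ | ⟨⟨T, hT⟩, t⟩
  · -- Case A : interval in path i
    have hmemiff : ∀ v : Vt l, v ∈ decode (Sum.inl ⟨i, ⟨(p,q), hpq⟩⟩) ↔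
        ∃ r : Fin (l i), v = Sum.inr ⟨i, r⟩ ∧ (p:ℕ) ≤ (r:ℕ) ∧ (r:ℕ) ≤ (q:ℕ) :=
      fun v => mem_decodeA
    have hp : Sum.inr ⟨i, p⟩ ∈ decode (Sum.inl ⟨i, ⟨(p,q), hpq⟩⟩) :=
      (hmemiff _).2 ⟨p, rfl, le_rfl, hpq⟩
    refine ⟨⟨_, hp⟩, ?_⟩
    rw [connected_iff]
    refine ⟨?_, ⟨⟨_, Finset.mem_coe.mpr hp⟩⟩⟩
    rintro ⟨uv, hum⟩ ⟨vv, hvm⟩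
    obtain ⟨r, rfl, h1, h2⟩ := (hmemiff _).1 (Finset.mem_coe.mp hum)
    obtain ⟨r', rfl, h1', h2'⟩ := (hmemiff _).1 (Finset.mem_coe.mp hvm)
    have hall : ∀ c : Fin (l i), (min (r:ℕ) (r':ℕ)) ≤ (c:ℕ) → (c:ℕ) ≤ (max (r:ℕ) (r':ℕ)) →
        Sum.inr ⟨i, c⟩ ∈ decode (Sum.inl ⟨i, ⟨(p,q), hpq⟩⟩) := by
      intro c hc1 hc2
      exact (hmemiff _).2 ⟨c, rfl, by omega, by omega⟩
    rcases le_total (r:ℕ) (r':ℕ) with hle | hle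
    · have := reach_path ((r':ℕ) - (r:ℕ)) r r' (by omega)
        (fun c hc1 hc2 => hall c (by omega) (by omega))
        (Finset.mem_coe.mp hum) (Finset.mem_coe.mp hvm)
      exact this
    · have := reach_path ((r:ℕ) - (r':ℕ)) r' r (by omega)
        (fun c hc1 hc2 => hall c (by omega) (by omega))
        (Finset.mem_coe.mp hvm) (Finset.mem_coe.mp hum)
      exact this.symm
  · -- Case B : cycle subset T with prefixes t
    set s : Finset (Vt l) := decode (Sum.inr ⟨⟨T, hT⟩, t⟩) with hs
    have hmemiff : ∀ v : Vt l, v ∈ s ↔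
        (∃ x : Fin 4, v = Sum.inl x ∧ x ∈ T) ∨
        (∃ (j : Fin 4) (r : Fin (l j)), v = Sum.inr ⟨j, r⟩ ∧ (r:ℕ) < (t j : ℕ)) :=
      fun v => mem_decodeB
    have hinl : ∀ x : Fin 4, x ∈ T → Sum.inl x ∈ s :=
      fun x hx => (hmemiff _).2 (Or.inl ⟨x, rfl, hx⟩)
    have hinr : ∀ (j : Fin 4) (r : Fin (l j)), (r:ℕ) < (t j : ℕ) → Sum.inr ⟨j, r⟩ ∈ s :=
      fun j r hr => (hmemiff _).2 (Or.inr ⟨j, r, rfl, hr⟩)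
    have htT : ∀ j : Fin 4, 0 < (t j : ℕ) → j ∈ T := by
      intro j hj
      by_contra hjT
      have h1 := (t j).is_lt
      have h2 : (if j ∈ (↑(⟨T, hT⟩ : {T : Finset (Fin 4) // connT T}) : Finset (Fin 4))
          then l j + 1 else 1) = 1 := if_neg hjT
      omega
    obtain ⟨x0, hx0⟩ := hT.1
    refine ⟨⟨_, hinl x0 hx0⟩, ?_⟩
    rw [connected_iff]
    refine ⟨?_, ⟨⟨_, Finset.mem_coe.mpr (hinl x0 hx0)⟩⟩⟩
    -- reach from inl x to inl y for x y ∈ T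
    have hstep : ∀ (a b : Fin 4) (hst : st T a b),
        ((Gp l).induce (↑s : Set (Vt l))).Reachable
          ⟨Sum.inl a, Finset.mem_coe.mpr (hinl a hst.2.1)⟩
          ⟨Sum.inl b, Finset.mem_coe.mpr (hinl b hst.2.2)⟩ :=
      fun a b hst => reach_of_adj (hinl a hst.2.1) (hinl b hst.2.2) (adj_inl_inl.2 hst.1)
    have hcyc : ∀ (a b : Fin 4) (ha : a ∈ T) (hb : b ∈ T),
        ((Gp l).induce (↑s : Set (Vt l))).Reachable
          ⟨Sum.inl a, Finset.mem_coe.mpr (hinl a ha)⟩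
          ⟨Sum.inl b, Finset.mem_coe.mpr (hinl b hb)⟩ := by
      intro a b ha hb
      rcases connT_reach T hT a ha b hb with rfl | h | ⟨z, h1, h2⟩ | ⟨z, w, h1, h2, h3⟩
      · exact Reachable.refl _
      · exact hstep a b h
      · exact (hstep a z h1).trans (hstep z b h2)
      · exact ((hstep a z h1).trans (hstep z w h2)).trans (hstep w b h3)
    have key : ∀ (vv : Vt l) (hvm : vv ∈ s), ∃ (x : Fin 4) (hx : x ∈ T),
        ((Gp l).induce (↑s : Set (Vt l))).Reachable
          ⟨Sum.inl x, Finset.mem_coe.mpr (hinl x hx)⟩ ⟨vv, Finset.mem_coe.mpr hvm⟩ := by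
      intro vv hvm
      rcases (hmemiff vv).1 hvm with ⟨x, rfl, hx⟩ | ⟨j, r, rfl, hr⟩
      · exact ⟨x, hx, Reachable.refl _⟩
      · have hjT : j ∈ T := htT j (by omega)
        exact ⟨j, hjT, reach_attach r (fun c hc => hinr j c (by omega)) (hinl j hjT)⟩
    rintro ⟨uv, hum⟩ ⟨vv, hvm⟩
    obtain ⟨x, hx, rx⟩ := key uv (Finset.mem_coe.mp hum)
    obtain ⟨y, hy, ry⟩ := key vv (Finset.mem_coe.mp hvm)
    exact rx.symm.trans ((hcyc x y hx hy).trans ry)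
end Backward

section Forward
variable {l : Fin 4 → ℕ}

lemma good_to_code {s : Finset (Vt l)} (hne : s.Nonempty)
    (hconn : ((Gp l).induce (↑s : Set (Vt l))).Connected) : ∃ c : Code l, decode c = s := by
  by_cases hinl : ∃ x : Fin 4, Sum.inl x ∈ s
  · -- Case B
    obtain ⟨x0, hx0⟩ := hinl
    have hpre : ∀ (i : Fin 4) (p : Fin (l i)), Sum.inr ⟨i, p⟩ ∈ s → Sum.inl i ∈ s := by
      intro i p hp
      exact ((hconn.preconnected ⟨_, Finset.mem_coe.mpr hp⟩ ⟨_, Finset.mem_coe.mpr hx0⟩).elim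
        fun w => (walk_prefix w i p rfl ⟨x0, rfl⟩).1)
    have hdown : ∀ (i : Fin 4) (p : Fin (l i)), Sum.inr ⟨i, p⟩ ∈ s →
        ∀ c : ℕ, c ≤ (p:ℕ) → ∃ r : Fin (l i), (r:ℕ) = c ∧ Sum.inr ⟨i, r⟩ ∈ s := by
      intro i p hp
      exact ((hconn.preconnected ⟨_, Finset.mem_coe.mpr hp⟩ ⟨_, Finset.mem_coe.mpr hx0⟩).elim
        fun w => (walk_prefix w i p rfl ⟨x0, rfl⟩).2)
    set T : Finset (Fin 4) := Finset.univ.filter (fun x : Fin 4 => Sum.inl x ∈ s) with hTdef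
    have hmemT : ∀ x : Fin 4, x ∈ T ↔ Sum.inl x ∈ s := by
      intro x; simp [hTdef]
    have hbad : ∀ u v : Fin 4, Sum.inl u ∈ s → Sum.inl v ∈ s →
        Relation.ReflTransGen
          (fun a b : Fin 4 => (((a:ℕ)+1)%4 = b ∨ ((b:ℕ)+1)%4 = a) ∧
            Sum.inl a ∈ s ∧ Sum.inl b ∈ s) u v := by
      intro u v hu hv
      have := (hconn.preconnected ⟨_, Finset.mem_coe.mpr hu⟩ ⟨_, Finset.mem_coe.mpr hv⟩).elim
        fun w => walk_proj hpre w
      simpa using this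
    have hT : connT T := by
      refine ⟨⟨x0, (hmemT x0).2 hx0⟩, ?_, ?_⟩
      · intro hEq
        have hmem2 : ∀ a : Fin 4, Sum.inl a ∈ s → a = 0 ∨ a = 2 := by
          intro a ha
          have : a ∈ T := (hmemT a).2 ha
          rw [hEq] at this; simpa using this
        have h0 : Sum.inl (0 : Fin 4) ∈ s := (hmemT 0).1 (by rw [hEq]; decide)
        have h2 : Sum.inl (2 : Fin 4) ∈ s := (hmemT 2).1 (by rw [hEq]; decide)
        rcases (hbad 0 2 h0 h2).cases_head with heq | ⟨b, ⟨hadj, ha, hb⟩, -⟩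
        · exact absurd heq (by decide)
        · exact bad02 0 b (Or.inl rfl) (hmem2 b hb) hadj
      · intro hEq
        have hmem2 : ∀ a : Fin 4, Sum.inl a ∈ s → a = 1 ∨ a = 3 := by
          intro a ha
          have : a ∈ T := (hmemT a).2 ha
          rw [hEq] at this; simpa using this
        have h0 : Sum.inl (1 : Fin 4) ∈ s := (hmemT 1).1 (by rw [hEq]; decide)
        have h2 : Sum.inl (3 : Fin 4) ∈ s := (hmemT 3).1 (by rw [hEq]; decide)
        rcases (hbad 1 3 h0 h2).cases_head with heq | ⟨b, ⟨hadj, ha, hb⟩, -⟩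
        · exact absurd heq (by decide)
        · exact bad13 1 b (Or.inl rfl) (hmem2 b hb) hadj
    set Q : ∀ i : Fin 4, Finset (Fin (l i)) :=
      fun i => Finset.univ.filter (fun p : Fin (l i) => Sum.inr ⟨i, p⟩ ∈ s) with hQdef
    have hmemQ : ∀ (i : Fin 4) (p : Fin (l i)), p ∈ Q i ↔ Sum.inr ⟨i, p⟩ ∈ s := by
      intro i p; simp [hQdef]
    set n : Fin 4 → ℕ := fun i =>
      if h : (Q i).Nonempty then (((Q i).image Fin.val).max' (h.image _)) + 1 else 0 with hndef
    have hn2 : ∀ (i : Fin 4) (r : Fin (l i)), Sum.inr ⟨i, r⟩ ∈ s ↔ (r:ℕ) < n i := by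
      intro i r
      constructor
      · intro hr
        have hQne : (Q i).Nonempty := ⟨r, (hmemQ i r).2 hr⟩
        have : (r:ℕ) ≤ ((Q i).image Fin.val).max' (hQne.image _) :=
          Finset.le_max' _ _ (Finset.mem_image_of_mem _ ((hmemQ i r).2 hr))
        rw [hndef]; simp only [dif_pos hQne]; omega
      · intro hr
        have hQne : (Q i).Nonempty := by
          by_contra hQ
          rw [hndef] at hr; simp only [dif_neg hQ] at hr; omega
        rw [hndef] at hr; simp only [dif_pos hQne] at hr
        obtain ⟨pm, hpmQ, hpmval⟩ := Finset.mem_image.1 (((Q i).image Fin.val).max'_mem (hQne.image _))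
        obtain ⟨r', hr', hmem'⟩ := hdown i pm ((hmemQ i pm).1 hpmQ) (r:ℕ) (by omega)
        have : r' = r := Fin.ext hr'
        rwa [this] at hmem'
    have hn3 : ∀ i : Fin 4, 0 < n i → i ∈ T := by
      intro i hi
      have hQne : (Q i).Nonempty := by
        by_contra hQ
        rw [hndef] at hi; simp only [dif_neg hQ] at hi; omega
      obtain ⟨p, hp⟩ := hQne
      exact (hmemT i).2 (hpre i p ((hmemQ i p).1 hp))
    set t : ∀ i : Fin 4, Fin (if i ∈ (⟨T, hT⟩ : {T : Finset (Fin 4) // connT T}).val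
        then l i + 1 else 1) := fun i =>
      if h : i ∈ T then ⟨n i, by
        simp only [if_pos h]
        have : n i ≤ l i := by
          by_cases hQ : (Q i).Nonempty
          · rw [hndef]; simp only [dif_pos hQ]
            obtain ⟨pm, hpmQ, hpmval⟩ :=
              Finset.mem_image.1 (((Q i).image Fin.val).max'_mem (hQ.image _))
            have := pm.is_lt; omega
          · rw [hndef]; simp only [dif_neg hQ]; omega
        omega⟩
      else ⟨0, by rw [if_neg h]; omega⟩ with htdef
    refine ⟨Sum.inr ⟨⟨T, hT⟩, t⟩, ?_⟩
    have htval : ∀ i : Fin 4, ((t i : ℕ)) = n i := by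
      intro i
      by_cases h : i ∈ T
      · rw [htdef]; simp only [dif_pos h]
      · rw [htdef]; simp only [dif_neg h]
        by_contra hne'
        exact h (hn3 i (by omega))
    ext v
    rw [mem_decodeB]
    rcases v with x | ⟨j, r⟩
    · constructor
      · rintro (⟨x', hx', hxT⟩ | ⟨j, r, hcontra, -⟩)
        · have : x = x' := Sum.inl.inj hx'
          subst this
          exact (hmemT x).1 hxT
        · exact absurd hcontra (by simp)
      · intro hv
        exact Or.inl ⟨x, rfl, (hmemT x).2 hv⟩
    · constructor
      · rintro (⟨x', hcontra, -⟩ | ⟨j', r', heq, hr⟩)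
        · exact absurd hcontra (by simp)
        · have hj : j = j' ∧ HEq r r' := by simpa using heq
          obtain ⟨rfl, hr2⟩ := hj
          rw [eq_of_heq hr2]
          exact (hn2 j r').2 (by rw [← htval j]; exact hr)
      · intro hv
        exact Or.inr ⟨j, r, rfl, by rw [htval j]; exact (hn2 j r).1 hv⟩
  · -- Case A
    push_neg at hinl
    obtain ⟨v0, hv0⟩ := hne
    rcases hv00 : v0 with x | ⟨i0, p0⟩
    · exact absurd (hv00 ▸ hv0) (hinl x)
    rw [hv00] at hv0
    set P : Finset (Fin (l i0)) :=
      Finset.univ.filter (fun p : Fin (l i0) => Sum.inr ⟨i0, p⟩ ∈ s) with hPdef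
    have hmemP : ∀ p : Fin (l i0), p ∈ P ↔ Sum.inr ⟨i0, p⟩ ∈ s := by
      intro p; simp [hPdef]
    have hPne : P.Nonempty := ⟨p0, (hmemP p0).2 hv0⟩
    set a := P.min' hPne with ha
    set b := P.max' hPne with hb
    have hamem : Sum.inr ⟨i0, a⟩ ∈ s := (hmemP a).1 (P.min'_mem hPne)
    have hbmem : Sum.inr ⟨i0, b⟩ ∈ s := (hmemP b).1 (P.max'_mem hPne)
    have hab : (a:ℕ) ≤ (b:ℕ) := P.min'_le _ (P.max'_mem hPne)
    refine ⟨Sum.inl ⟨i0, ⟨(a, b), hab⟩⟩, ?_⟩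
    ext v
    rw [mem_decodeA']
    constructor
    · rintro ⟨r, rfl, h1, h2⟩
      obtain ⟨q, hq, hint⟩ := (hconn.preconnected ⟨_, Finset.mem_coe.mpr hamem⟩
        ⟨_, Finset.mem_coe.mpr hbmem⟩).elim
        (fun w => walk_noinl hinl w i0 a rfl)
      have hqb : b = q := by simpa using hq
      subst hqb
      obtain ⟨r', hr', hmem'⟩ := hint (r:ℕ) (by omega) (by omega)
      have : r' = r := Fin.ext hr'
      rwa [this] at hmem'
    · intro hv
      obtain ⟨q, hq, -⟩ := (hconn.preconnected ⟨_, Finset.mem_coe.mpr hv0⟩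
        ⟨_, Finset.mem_coe.mpr hv⟩).elim
        (fun w => walk_noinl hinl w i0 p0 rfl)
      refine ⟨q, hq, ?_, ?_⟩
      · exact P.min'_le _ ((hmemP q).2 (hq ▸ hv))
      · exact P.le_max' _ ((hmemP q).2 (hq ▸ hv))
end Forward

section Inj
variable {l : Fin 4 → ℕ}

lemma decode_inj : Function.Injective (decode (l := l)) := by
  rintro (⟨i, ⟨⟨p, q⟩, hpq⟩⟩ | ⟨⟨T, hT⟩, t⟩) (⟨i', ⟨⟨p', q'⟩, hpq'⟩⟩ | ⟨⟨T', hT'⟩, t'⟩) heq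
  · -- A A
    have hmp : Sum.inr ⟨i, p⟩ ∈ decode (.inl ⟨i', ⟨(p', q'), hpq'⟩⟩) := by
      rw [← heq]; exact mem_decodeA'.2 ⟨p, rfl, le_rfl, hpq⟩
    obtain ⟨r, hr, hr1, hr2⟩ := mem_decodeA'.1 hmp
    have hii : i = i' ∧ HEq p r := by simpa using hr
    obtain ⟨rfl, hp⟩ := hii
    obtain rfl := eq_of_heq hp
    have hmq : Sum.inr ⟨i, q⟩ ∈ decode (.inl ⟨i, ⟨(p', q'), hpq'⟩⟩) := by
      rw [← heq]; exact mem_decodeA'.2 ⟨q, rfl, hpq, le_rfl⟩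
    obtain ⟨rq, hrq, hrq1, hrq2⟩ := mem_decodeA'.1 hmq
    have : q = rq := by simpa using hrq
    subst this
    have hmp' : Sum.inr ⟨i, p'⟩ ∈ decode (.inl ⟨i, ⟨(p, q), hpq⟩⟩) := by
      rw [heq]; exact mem_decodeA'.2 ⟨p', rfl, le_rfl, hpq'⟩
    obtain ⟨rp', hrp', h1, h2⟩ := mem_decodeA'.1 hmp'
    have : p' = rp' := by simpa using hrp'
    subst this
    have hmq' : Sum.inr ⟨i, q'⟩ ∈ decode (.inl ⟨i, ⟨(p, q), hpq⟩⟩) := by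
      rw [heq]; exact mem_decodeA'.2 ⟨q', rfl, hpq', le_rfl⟩
    obtain ⟨rq', hrq', h1', h2'⟩ := mem_decodeA'.1 hmq'
    have : q' = rq' := by simpa using hrq'
    subst this
    have hip : p = p' := Fin.ext (by omega)
    have hiq : q = q' := Fin.ext (by omega)
    subst hip; subst hiq
    rfl
  · -- A B  : impossible
    exfalso
    obtain ⟨x0, hx0⟩ := hT'.1
    have : Sum.inl x0 ∈ decode (.inl (⟨i, ⟨(p, q), hpq⟩⟩ : CodeA l)) := by
      rw [heq]; exact mem_decodeB.2 (Or.inl ⟨x0, rfl, hx0⟩)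
    obtain ⟨r, hr, -, -⟩ := mem_decodeA'.1 this
    exact absurd hr (by simp)
  · -- B A : impossible
    exfalso
    obtain ⟨x0, hx0⟩ := hT.1
    have : Sum.inl x0 ∈ decode (.inl (⟨i', ⟨(p', q'), hpq'⟩⟩ : CodeA l)) := by
      rw [← heq]; exact mem_decodeB.2 (Or.inl ⟨x0, rfl, hx0⟩)
    obtain ⟨r, hr, -, -⟩ := mem_decodeA'.1 this
    exact absurd hr (by simp)
  · -- B B
    have hTT : T = T' := by
      ext x
      constructor
      · intro hx
        have : Sum.inl x ∈ decode (.inr ⟨⟨T', hT'⟩, t'⟩) := by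
          rw [← heq]; exact mem_decodeB.2 (Or.inl ⟨x, rfl, hx⟩)
        rcases mem_decodeB.1 this with ⟨x', hx', hm⟩ | ⟨j, r, hc, -⟩
        · rwa [Sum.inl.inj hx']
        · exact absurd hc (by simp)
      · intro hx
        have : Sum.inl x ∈ decode (.inr ⟨⟨T, hT⟩, t⟩) := by
          rw [heq]; exact mem_decodeB.2 (Or.inl ⟨x, rfl, hx⟩)
        rcases mem_decodeB.1 this with ⟨x', hx', hm⟩ | ⟨j, r, hc, -⟩
        · rwa [Sum.inl.inj hx']
        · exact absurd hc (by simp)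
    subst hTT
    have htt : t = t' := by
      funext i
      apply Fin.ext
      by_cases hiT : i ∈ T
      · -- both values < l i + 1 ; show equal by double inequality
        by_contra hne
        have hlt : (t i : ℕ) < (t' i : ℕ) ∨ (t' i : ℕ) < (t i : ℕ) := by omega
        have hbound : ∀ u : Fin (if i ∈ (⟨T, hT⟩ : {T : Finset (Fin 4) // connT T}).val
            then l i + 1 else 1), (u : ℕ) ≤ l i := by
          intro u
          have := u.is_lt
          have h2 : (if i ∈ (⟨T, hT⟩ : {T : Finset (Fin 4) // connT T}).val
              then l i + 1 else 1) = l i + 1 := if_pos hiT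
          omega
        rcases hlt with hlt | hlt
        · have hr : ((t i : ℕ)) < l i := lt_of_lt_of_le hlt (hbound _)
          set r : Fin (l i) := ⟨(t i : ℕ), hr⟩ with hrdef
          have : Sum.inr ⟨i, r⟩ ∈ decode (.inr ⟨⟨T, hT⟩, t⟩) := by
            rw [heq]
            exact mem_decodeB.2 (Or.inr ⟨i, r, rfl, by rw [hrdef]; exact hlt⟩)
          rcases mem_decodeB.1 this with ⟨x', hc, -⟩ | ⟨j, r', hc, hr'⟩
          · exact absurd hc (by simp)
          · have : i = j ∧ HEq r r' := by simpa using hc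
            obtain ⟨rfl, hh⟩ := this
            rw [← eq_of_heq hh, hrdef] at hr'
            have hval : ((⟨(t i : ℕ), hr⟩ : Fin (l i)) : ℕ) = (t i : ℕ) := rfl
            omega
        · have hr : ((t' i : ℕ)) < l i := lt_of_lt_of_le hlt (hbound _)
          set r : Fin (l i) := ⟨(t' i : ℕ), hr⟩ with hrdef
          have : Sum.inr ⟨i, r⟩ ∈ decode (.inr ⟨⟨T, hT⟩, t⟩) := by
            exact mem_decodeB.2 (Or.inr ⟨i, r, rfl, by rw [hrdef]; exact hlt⟩)
          rw [heq] at this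
          rcases mem_decodeB.1 this with ⟨x', hc, -⟩ | ⟨j, r', hc, hr'⟩
          · exact absurd hc (by simp)
          · have : i = j ∧ HEq r r' := by simpa using hc
            obtain ⟨rfl, hh⟩ := this
            rw [← eq_of_heq hh, hrdef] at hr'
            have hval : ((⟨(t' i : ℕ), hr⟩ : Fin (l i)) : ℕ) = (t' i : ℕ) := rfl
            omega
      · have h1 := (t i).is_lt
        have h2 := (t' i).is_lt
        have h3 : (if i ∈ (⟨T, hT⟩ : {T : Finset (Fin 4) // connT T}).val
            then l i + 1 else 1) = 1 := if_neg hiT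
        omega
    cases htt
    rfl
end Inj

def A (k : ℕ) : ℕ := Fintype.card {pq : Fin k × Fin k // (pq.1:ℕ) ≤ (pq.2:ℕ)}

section Count
variable (l : Fin 4 → ℕ)

lemma numCIS_eq_card : numCIS (Gp l) = Fintype.card (Code l) := by
  have hbij : Function.Bijective (fun c : Code l =>
      (⟨decode c, (decode_good c).1, (decode_good c).2⟩ :
        {s : Finset (Vt l) // s.Nonempty ∧ ((Gp l).induce (↑s : Set (Vt l))).Connected})) := by
    constructor
    · intro c c' h
      exact decode_inj (congrArg Subtype.val h)
    · rintro ⟨s, hne, hconn⟩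
      obtain ⟨c, hc⟩ := good_to_code hne hconn
      exact ⟨c, Subtype.ext hc⟩
  have : numCIS (Gp l) = Nat.card
      {s : Finset (Vt l) // s.Nonempty ∧ ((Gp l).induce (↑s : Set (Vt l))).Connected} := rfl
  rw [this, Nat.card_congr (Equiv.ofBijective _ hbij).symm, Nat.card_eq_fintype_card]

lemma card_code : Fintype.card (Code l) =
    (∑ i : Fin 4, A (l i)) +
    ∑ T : {T : Finset (Fin 4) // connT T},
      ∏ i : Fin 4, (if i ∈ T.val then l i + 1 else 1) := by
  have hA : Fintype.card (CodeA l) = ∑ i : Fin 4, A (l i) := by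
    rw [Fintype.card_sigma]; rfl
  have hB : Fintype.card (CodeB l) = ∑ T : {T : Finset (Fin 4) // connT T},
      ∏ i : Fin 4, (if i ∈ T.val then l i + 1 else 1) := by
    rw [Fintype.card_sigma]
    refine Finset.sum_congr rfl fun T _ => ?_
    rw [Fintype.card_pi]
    exact Finset.prod_congr rfl fun i _ => Fintype.card_fin _
  rw [Fintype.card_sum, hA, hB]

lemma sum_subtype_conn (g : Finset (Fin 4) → ℕ) :
    (∑ T : {T : Finset (Fin 4) // connT T}, g T.val) =
      g {0} + g {1} + g {2} + g {3} + g {0,1} + g {1,2} + g {2,3} + g {0,3} +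
      g {0,1,2} + g {1,2,3} + g {0,2,3} + g {0,1,3} + g {0,1,2,3} := by
  rw [← Finset.sum_subtype
    ({{0},{1},{2},{3},{0,1},{1,2},{2,3},{0,3},{0,1,2},{1,2,3},{0,2,3},{0,1,3},{0,1,2,3}} :
      Finset (Finset (Fin 4))) (by decide) g]
  rw [Finset.sum_insert (by decide), Finset.sum_insert (by decide),
    Finset.sum_insert (by decide), Finset.sum_insert (by decide),
    Finset.sum_insert (by decide), Finset.sum_insert (by decide),
    Finset.sum_insert (by decide), Finset.sum_insert (by decide),
    Finset.sum_insert (by decide), Finset.sum_insert (by decide),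
    Finset.sum_insert (by decide), Finset.sum_insert (by decide),
    Finset.sum_singleton]
  ring

lemma numCIS_formula :
    numCIS (cyclePendants 4 4 ![0,1,2,3] l) = (∑ i : Fin 4, A (l i)) +
      ((l 0 + 1) + (l 1 + 1) + (l 2 + 1) + (l 3 + 1) +
       (l 0 + 1) * (l 1 + 1) + (l 1 + 1) * (l 2 + 1) + (l 2 + 1) * (l 3 + 1) +
       (l 0 + 1) * (l 3 + 1) +
       (l 0 + 1) * (l 1 + 1) * (l 2 + 1) + (l 1 + 1) * (l 2 + 1) * (l 3 + 1) +
       (l 0 + 1) * (l 2 + 1) * (l 3 + 1) + (l 0 + 1) * (l 1 + 1) * (l 3 + 1) +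
       (l 0 + 1) * (l 1 + 1) * (l 2 + 1) * (l 3 + 1)) := by
  have h0 : numCIS (cyclePendants 4 4 ![0,1,2,3] l) = numCIS (Gp l) := rfl
  rw [h0, numCIS_eq_card, card_code,
    sum_subtype_conn (fun T => ∏ i : Fin 4, if i ∈ T then l i + 1 else 1)]
  congr 1
  simp (config := { decide := true }) [Fin.prod_univ_four]
end Count
end CIS

/-- With `H1` the 4-cycle with pendant paths of `n0, n0, n0-1, n0-1` new vertices at
`v0, v1, v2, v3` (longer paths at adjacent cycle vertices) and `H2` the 4-cycle with
pendant paths of `n0, n0-1, n0, n0-1` new vertices (longer paths at opposite vertices),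
`N(H1) - N(H2) = 1`; in particular `N(H2) < N(H1)`. -/
theorem numCIS_adjacent_vs_opposite (n0 : ℕ) (h : 2 ≤ n0) :
    numCIS (cyclePendants 4 4 ![0, 1, 2, 3] ![n0, n0, n0 - 1, n0 - 1]) =
      numCIS (cyclePendants 4 4 ![0, 1, 2, 3] ![n0, n0 - 1, n0, n0 - 1]) + 1 ∧
    numCIS (cyclePendants 4 4 ![0, 1, 2, 3] ![n0, n0 - 1, n0, n0 - 1]) <
      numCIS (cyclePendants 4 4 ![0, 1, 2, 3] ![n0, n0, n0 - 1, n0 - 1]) := by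
  obtain ⟨m, rfl⟩ : ∃ m, n0 = m + 1 := ⟨n0 - 1, by omega⟩
  have e0 : ∀ a b c d : ℕ, (![a,b,c,d] : Fin 4 → ℕ) 0 = a := fun _ _ _ _ => rfl
  have e1 : ∀ a b c d : ℕ, (![a,b,c,d] : Fin 4 → ℕ) 1 = b := fun _ _ _ _ => rfl
  have e2 : ∀ a b c d : ℕ, (![a,b,c,d] : Fin 4 → ℕ) 2 = c := fun _ _ _ _ => rfl
  have e3 : ∀ a b c d : ℕ, (![a,b,c,d] : Fin 4 → ℕ) 3 = d := fun _ _ _ _ => rfl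
  have hEq : numCIS (cyclePendants 4 4 ![0, 1, 2, 3] ![m+1, m+1, m+1 - 1, m+1 - 1]) =
      numCIS (cyclePendants 4 4 ![0, 1, 2, 3] ![m+1, m+1 - 1, m+1, m+1 - 1]) + 1 := by
    rw [CIS.numCIS_formula, CIS.numCIS_formula, Fin.sum_univ_four, Fin.sum_univ_four]
    simp only [e0, e1, e2, e3, Nat.add_sub_cancel]
    ring
  exact ⟨hEq, hEq ▸ Nat.lt_succ_self _⟩
end
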